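/- arXiv:2108.01430 — 6 statements merged into one kernel-verified Lean document; each statement's English description precedes it below -/
import Mathlib

section
/- Let T be a finite tree rooted at a vertex ρ and let 𝒫 be a finite family of simple paths in T. Let x : V(T) → ℝ satisfy 0 ≤ x_v ≤ 1 for every vertex v and Σ_{v ∈ V(P)} x_v ≥ 1 for every P ∈ 𝒫. Set x̂_v = min(2·x_v, 1) for every v, and let d_v = Σ_{u ∈ V(Q_v)} x̂_u, where Q_v is the unique path in T from ρ to v. For r ∈ [0,1) define the bin B_r = { v ∈ V(T) : there exists an integer q with d_v − x̂_v ≤ q + r < d_v }. Then for every r ∈ [0,1), the bin B_r intersects the vertex set of every path in 𝒫. -/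
open SimpleGraph Walk
set_option linter.unusedSectionVars false

section TreeBinsAux

variable {V : Type*} [Fintype V] [DecidableEq V]
  {T : SimpleGraph V} {ρ : V} {xh d : V → ℝ}

private lemma tb_path_eq (hT : T.IsTree) {a b : V} {p q : T.Walk a b}
    (hp : p.IsPath) (hq : q.IsPath) : p = q :=
  (hT.existsUnique_path a b).unique hp hq

private lemma tb_support_getLast {s t : V} (p : T.Walk s t) :
    p.support.getLast? = some t := by
  induction p with
  | nil => rfl
  | cons h p ih =>
    rw [support_cons, p.support_eq_cons, List.getLast?_cons_cons, ← p.support_eq_cons, ih]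

private lemma tb_concat_isPath {u v : V} {p : T.Walk ρ u} (hp : p.IsPath)
    (h : T.Adj u v) (hv : v ∉ p.support) : (p.concat h).IsPath := by
  rw [← isPath_reverse_iff, reverse_concat]
  rw [cons_isPath_iff]
  refine ⟨hp.reverse, ?_⟩
  rwa [support_reverse, List.mem_reverse]

/-- adjacent vertices: one root path extends the other. -/
private lemma tb_adj_concat (hT : T.IsTree) (Q : ∀ v : V, T.Walk ρ v)
    (hQ : ∀ v, (Q v).IsPath) {u v : V} (h : T.Adj u v) :
    (Q v = (Q u).concat h) ∨ (Q u = (Q v).concat h.symm) := by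
  by_cases hv : v ∈ (Q u).support
  · right
    have hp : ((Q u).takeUntil v hv).IsPath := (hQ u).takeUntil hv
    have hqv : Q v = (Q u).takeUntil v hv := tb_path_eq hT (hQ v) hp
    have hu : u ∉ ((Q u).takeUntil v hv).support := by
      intro hmem
      have hspec := (Q u).take_spec hv
      have hnd : ((((Q u).takeUntil v hv).append ((Q u).dropUntil v hv)).support).Nodup := by
        rw [hspec]; exact (hQ u).support_nodup
      rw [support_append, List.nodup_append] at hnd
      have hu2 : u ∈ ((Q u).dropUntil v hv).support := end_mem_support _
      rw [support_eq_cons, List.mem_cons] at hu2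
      rcases hu2 with rfl | hu2
      · exact h.ne rfl
      · exact hnd.2.2 _ hmem _ hu2 rfl
    have : ((Q u).takeUntil v hv).concat h.symm = Q u :=
      (tb_path_eq hT (tb_concat_isPath hp h.symm hu) (hQ u))
    rw [hqv, this]
  · left
    exact tb_path_eq hT (hQ v) (tb_concat_isPath (hQ u) h hv)

private lemma tb_concat_facts (Q : ∀ v : V, T.Walk ρ v) (hQ : ∀ v, (Q v).IsPath)
    (hd : ∀ w, d w = ∑ z ∈ (Q w).support.toFinset, xh z)
    {u v : V} (h : T.Adj u v) (he : Q v = (Q u).concat h) :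
    v ∉ (Q u).support ∧ d v = d u + xh v := by
  have hnd : (Q v).support.Nodup := (hQ v).support_nodup
  rw [he, support_concat] at hnd
  have hv : v ∉ (Q u).support := by
    rw [List.nodup_append] at hnd
    intro hmem
    exact hnd.2.2 _ hmem _ (List.mem_singleton_self v) rfl
  refine ⟨hv, ?_⟩
  rw [hd v, hd u, he, support_concat, List.toFinset_append]
  have : (Q u).support.toFinset ∪ [v].toFinset = insert v (Q u).support.toFinset := by
    rw [Finset.insert_eq, Finset.union_comm]; simp
  rw [this, Finset.sum_insert (by simpa using hv)]
  ring

private lemma tb_parent_unique (Q : ∀ v : V, T.Walk ρ v)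
    {u a w : V} (h1 : T.Adj a u) (h2 : T.Adj w u)
    (e1 : Q u = (Q a).concat h1) (e2 : Q u = (Q w).concat h2) : a = w := by
  have hsup : (Q a).support.concat u = (Q w).support.concat u := by
    rw [List.concat_eq_append, List.concat_eq_append, ← support_concat (p := Q a) (h := h1), ← support_concat (p := Q w) (h := h2), ← e1, ← e2]
  rw [List.concat_eq_append, List.concat_eq_append] at hsup
  have hsup2 : (Q a).support = (Q w).support := List.append_cancel_right hsup
  have ha := tb_support_getLast (Q a)
  have hw := tb_support_getLast (Q w)
  rw [hsup2, hw] at ha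
  exact (Option.some.inj ha).symm

/-- numeric dichotomy for adjacent vertices -/
private lemma tb_adj_num (hT : T.IsTree) (Q : ∀ v : V, T.Walk ρ v) (hQ : ∀ v, (Q v).IsPath)
    (hd : ∀ w, d w = ∑ z ∈ (Q w).support.toFinset, xh z)
    {u v : V} (h : T.Adj u v) :
    d v = d u + xh v ∨ d u = d v + xh u := by
  rcases tb_adj_concat hT Q hQ h with he | he
  · exact Or.inl (tb_concat_facts Q hQ hd h he).2
  · exact Or.inr (tb_concat_facts Q hQ hd h.symm he).2

end TreeBinsAux
section TreeBinsAux2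

variable {V : Type*} [Fintype V] [DecidableEq V]
  {T : SimpleGraph V} {ρ : V} {xh d : V → ℝ}

/-- covering lemma: along any walk, if `y` lies between `d s - xh s` and `d t`,
some vertex interval covers `y`. -/
private lemma tb_cover (hT : T.IsTree) (Q : ∀ v : V, T.Walk ρ v) (hQ : ∀ v, (Q v).IsPath)
    (hd : ∀ w, d w = ∑ z ∈ (Q w).support.toFinset, xh z) (hxh0 : ∀ w, 0 ≤ xh w)
    {s t : V} (W : T.Walk s t) :
    ∀ y : ℝ, d s - xh s ≤ y → y < d t → ∃ v ∈ W.support, d v - xh v ≤ y ∧ y < d v := by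
  induction W with
  | nil => exact fun y h1 h2 => ⟨_, start_mem_support _, h1, h2⟩
  | @cons a u t h W ih =>
    intro y h1 h2
    by_cases hy : y < d a
    · exact ⟨a, start_mem_support _, h1, hy⟩
    · push_neg at hy
      have h1' : d u - xh u ≤ y := by
        rcases tb_adj_num hT Q hQ hd h with hc | hc
        · linarith
        · have := hxh0 u; have := hxh0 a; linarith
      obtain ⟨v, hv, hv2⟩ := ih y h1' h2
      exact ⟨v, by rw [support_cons]; exact List.mem_cons_of_mem _ hv, hv2⟩

/-- descending lemma -/
private lemma tb_desc (hT : T.IsTree) (Q : ∀ v : V, T.Walk ρ v) (hQ : ∀ v, (Q v).IsPath)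
    (hd : ∀ w, d w = ∑ z ∈ (Q w).support.toFinset, xh z) (hxh0 : ∀ w, 0 ≤ xh w)
    {u b : V} (W : T.Walk u b) :
    ∀ (hW : W.IsPath) (a : V) (h : T.Adj a u), Q u = (Q a).concat h → a ∉ W.support →
      ((∑ v ∈ W.support.toFinset, xh v) = d b - d u + xh u ∧
        ∀ v ∈ W.support, d u - xh u ≤ d v - xh v) := by
  induction W with
  | nil =>
    intro _ a h he _
    constructor
    · simp
    · intro v hv
      rw [support_nil, List.mem_singleton] at hv
      subst hv; exact le_rfl
  | @cons u w b h' W ih =>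
    intro hW a h he ha
    rw [support_cons] at ha
    have hau : a ≠ u := fun habs => ha (habs ▸ List.mem_cons_self)
    have haW : a ∉ W.support := fun habs => ha (List.mem_cons_of_mem _ habs)
    have haw : w ≠ a := fun habs => haW (habs ▸ start_mem_support W)
    rw [cons_isPath_iff] at hW
    have hchild : Q w = (Q u).concat h' := by
      rcases tb_adj_concat hT Q hQ h' with he' | he'
      · exact he'
      · exact (haw (tb_parent_unique Q h h'.symm he he').symm).elim
    obtain ⟨hwu, hdw⟩ := tb_concat_facts Q hQ hd h' hchild
    obtain ⟨hsum, hmin⟩ := ih hW.1 u h' hchild hW.2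
    constructor
    · rw [support_cons, List.toFinset_cons, Finset.sum_insert (by simpa using hW.2), hsum, hdw]
      ring
    · intro v hv
      rw [support_cons, List.mem_cons] at hv
      rcases hv with rfl | hv
      · exact le_rfl
      · have := hmin v hv
        have := hxh0 u
        linarith

/-- sum bound along a path -/
private lemma tb_sum_le (hT : T.IsTree) (Q : ∀ v : V, T.Walk ρ v) (hQ : ∀ v, (Q v).IsPath)
    (hd : ∀ w, d w = ∑ z ∈ (Q w).support.toFinset, xh z) (hxh0 : ∀ w, 0 ≤ xh w)
    {a b : V} (W : T.Walk a b) :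
    ∀ (hW : W.IsPath) (y : ℝ), (∀ v ∈ W.support, y ≤ d v - xh v) →
      (∑ v ∈ W.support.toFinset, xh v) ≤ (d a - y) + (d b - y) := by
  induction W with
  | @nil a =>
    intro _ y hy
    have h1 := hy a (start_mem_support _)
    have h2 := hxh0 a
    simp only [support_nil, List.toFinset_cons, List.toFinset_nil, LawfulSingleton.insert_empty_eq,
      Finset.sum_singleton]
    linarith
  | @cons a u b h W ih =>
    intro hW y hy
    rw [cons_isPath_iff] at hW
    have hya : y ≤ d a - xh a := hy a (by rw [support_cons]; exact List.mem_cons_self)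
    have hsupp : (cons h W).support.toFinset = insert a W.support.toFinset := by
      rw [support_cons, List.toFinset_cons]
    rcases tb_adj_concat hT Q hQ h with he | he
    · -- u is child of a : descending from here on
      obtain ⟨hsum, _⟩ := tb_desc hT Q hQ hd hxh0 W hW.1 a h he hW.2
      have hdu := (tb_concat_facts Q hQ hd h he).2
      rw [hsupp, Finset.sum_insert (by simpa using hW.2), hsum]
      have := hxh0 a
      linarith
    · -- a is child of u : ascend
      have hda := (tb_concat_facts Q hQ hd h.symm he).2
      have hIH := ih hW.1 y (fun v hv => hy v (by rw [support_cons]; exact List.mem_cons_of_mem _ hv))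
      rw [hsupp, Finset.sum_insert (by simpa using hW.2)]
      linarith

/-- ceil constancy under non-membership -/
private lemma tb_ceil_const (hT : T.IsTree) (Q : ∀ v : V, T.Walk ρ v) (hQ : ∀ v, (Q v).IsPath)
    (hd : ∀ w, d w = ∑ z ∈ (Q w).support.toFinset, xh z) (hxh0 : ∀ w, 0 ≤ xh w)
    (r : ℝ) {s t : V} (W : T.Walk s t) :
    ∀ (hNM : ∀ v ∈ W.support, ∀ q : ℤ, d v - xh v ≤ q + r → d v ≤ q + r),
      ∀ v ∈ W.support, ⌈d v - r⌉ = ⌈d s - r⌉ := by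
  have key : ∀ w : V, (∀ q : ℤ, d w - xh w ≤ q + r → d w ≤ q + r) →
      ⌈d w - xh w - r⌉ = ⌈d w - r⌉ := by
    intro w hw
    refine le_antisymm (Int.ceil_le_ceil (by have := hxh0 w; linarith)) ?_
    have h1 : d w - xh w - r ≤ (⌈d w - xh w - r⌉ : ℝ) := Int.le_ceil _
    have h2 : d w ≤ (⌈d w - xh w - r⌉ : ℝ) + r := hw _ (by linarith)
    exact Int.ceil_le.2 (by linarith)
  induction W with
  | nil =>
    intro _ v hv
    rw [support_nil, List.mem_singleton] at hv
    rw [hv]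
  | @cons s u t h W ih =>
    intro hNM v hv
    have hNMs : ∀ q : ℤ, d s - xh s ≤ q + r → d s ≤ q + r :=
      hNM s (by rw [support_cons]; exact List.mem_cons_self)
    have hNMu : ∀ q : ℤ, d u - xh u ≤ q + r → d u ≤ q + r :=
      hNM u (by rw [support_cons]; exact List.mem_cons_of_mem _ (start_mem_support _))
    have hus : ⌈d u - r⌉ = ⌈d s - r⌉ := by
      rcases tb_adj_num hT Q hQ hd h with hc | hc
      · have := key u hNMu
        rw [← this]; congr 1; rw [hc]; ring
      · have := key s hNMs
        rw [← this]; congr 1; rw [hc]; ring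
    rw [support_cons, List.mem_cons] at hv
    rcases hv with rfl | hv
    · rfl
    · rw [ih (fun w hw => hNM w (by rw [support_cons]; exact List.mem_cons_of_mem _ hw)) v hv, hus]

end TreeBinsAux2
section TreeBinsAux3
variable {V : Type*} [Fintype V] [DecidableEq V]
  {T : SimpleGraph V} {ρ : V} {xh d : V → ℝ}

private lemma tb_nm_ceil {r : ℝ} {w : V} (hxh0 : 0 ≤ xh w)
    (hw : ∀ q : ℤ, d w - xh w ≤ q + r → d w ≤ q + r) :
    ⌈d w - xh w - r⌉ = ⌈d w - r⌉ := by
  refine le_antisymm (Int.ceil_le_ceil (by linarith)) ?_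
  have h1 : d w - xh w - r ≤ (⌈d w - xh w - r⌉ : ℝ) := Int.le_ceil _
  have h2 : d w ≤ (⌈d w - xh w - r⌉ : ℝ) + r := hw _ (by linarith)
  exact Int.ceil_le.2 (by linarith)

end TreeBinsAux3

/-- In a tree `T` rooted at `ρ`, with a fractional multicut solution `x`,
`x̂ = min(2x, 1)`, and `d_v` the `x̂`-length of the unique path from `ρ` to `v`, every bin
`B_r = {v : ∃ q ∈ ℤ, d_v − x̂_v ≤ q + r < d_v}` (for `r ∈ [0,1)`) intersects the vertex set
of every path in the family. -/
theorem tree_bins_are_multicuts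
    {V : Type*} [Fintype V] [DecidableEq V]
    (T : SimpleGraph V) (hT : T.IsTree) (ρ : V)
    {ι : Type*} [Fintype ι] (e₁ e₂ : ι → V)
    (P : ∀ i : ι, T.Walk (e₁ i) (e₂ i)) (hP : ∀ i, (P i).IsPath)
    (x : V → ℝ) (hx0 : ∀ v, 0 ≤ x v) (hx1 : ∀ v, x v ≤ 1)
    (hcov : ∀ i, 1 ≤ ∑ v ∈ (P i).support.toFinset, x v)
    (xh : V → ℝ) (hxh : ∀ v, xh v = min (2 * x v) 1)
    (Q : ∀ v : V, T.Walk ρ v) (hQ : ∀ v, (Q v).IsPath)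
    (d : V → ℝ) (hd : ∀ v, d v = ∑ u ∈ (Q v).support.toFinset, xh u)
    (r : ℝ) (hr : r ∈ Set.Ico (0 : ℝ) 1) :
    ∀ i, ∃ v ∈ (P i).support, ∃ q : ℤ, d v - xh v ≤ q + r ∧ (q : ℝ) + r < d v := by
  intro i
  by_contra hcon
  push_neg at hcon
  -- hcon : ∀ v ∈ (P i).support, ∀ q : ℤ, d v - xh v ≤ ↑q + r → d v ≤ ↑q + r
  have hxh0 : ∀ v, 0 ≤ xh v := fun v => by
    rw [hxh]; exact le_min (by linarith [hx0 v]) zero_le_one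
  have hceil : ∀ v ∈ (P i).support, ⌈d v - r⌉ = ⌈d (e₁ i) - r⌉ :=
    tb_ceil_const hT Q hQ hd hxh0 r (P i) hcon
  have hub : ∀ v ∈ (P i).support, d v - r ≤ (⌈d (e₁ i) - r⌉ : ℝ) := by
    intro v hv
    have := Int.le_ceil (d v - r)
    rw [hceil v hv] at this
    exact this
  have hlb : ∀ v ∈ (P i).support, (⌈d (e₁ i) - r⌉ : ℝ) - 1 < d v - xh v - r := by
    intro v hv
    have h1 := tb_nm_ceil (d := d) (hxh0 v) (hcon v hv)
    rw [hceil v hv] at h1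
    have h2 := Int.ceil_lt_add_one (d v - xh v - r)
    rw [h1] at h2
    linarith
  have hxhlt : ∀ v ∈ (P i).support, xh v < 1 := by
    intro v hv
    have h1 := hub v hv
    have h2 := hlb v hv
    linarith
  have hx2 : ∀ v ∈ (P i).support, xh v = 2 * x v := by
    intro v hv
    rcases le_or_gt (2 * x v) 1 with h | h
    · rw [hxh, min_eq_left h]
    · exfalso
      have := hxhlt v hv
      rw [hxh, min_eq_right h.le] at this
      linarith
  have hsum2 : 2 ≤ ∑ v ∈ (P i).support.toFinset, xh v := by
    have heq : ∑ v ∈ (P i).support.toFinset, xh v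
        = 2 * ∑ v ∈ (P i).support.toFinset, x v := by
      rw [Finset.mul_sum]
      exact Finset.sum_congr rfl fun v hv => hx2 v (List.mem_toFinset.1 hv)
    rw [heq]
    linarith [hcov i]
  obtain ⟨v₀, hv₀, hmin⟩ := Finset.exists_min_image (P i).support.toFinset
    (fun v => d v - xh v)
    ⟨_, List.mem_toFinset.2 (SimpleGraph.Walk.start_mem_support (P i))⟩
  have hεle : ∀ v ∈ (P i).support, d v₀ - xh v₀ ≤ d v - xh v := fun v hv =>
    hmin v (List.mem_toFinset.2 hv)
  have upper := tb_sum_le hT Q hQ hd hxh0 (P i) (hP i) (d v₀ - xh v₀) hεle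
  have hda := hub (e₁ i) (SimpleGraph.Walk.start_mem_support (P i))
  have hdb := hub (e₂ i) (SimpleGraph.Walk.end_mem_support (P i))
  have hlv₀ := hlb v₀ (List.mem_toFinset.1 hv₀)
  linarith
end

section
/- Let V be a finite set with weights w : V → ℕ, let x̂ : V → ℝ satisfy 0 ≤ x̂_v ≤ 1 for every v ∈ V, and let d : V → ℝ be arbitrary. For r ∈ [0,1) define the bin B_r = { v ∈ V : there exists an integer q with d_v − x̂_v ≤ q + r < d_v }. Then there exists r* ∈ [0,1) such that Σ_{v ∈ B_{r*}} w(v) ≤ Σ_{v ∈ V} w(v)·x̂_v. -/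
open MeasureTheory Set ENNReal

/-- The bin-membership set for a single item, intersected with `[0,1)`,
is the union of two explicit half-open intervals. -/
lemma binSet_inter_eq (x d : ℝ) (hx0 : 0 ≤ x) (hx1 : x ≤ 1) :
    {r : ℝ | ∃ q : ℤ, d - x ≤ q + r ∧ (q : ℝ) + r < d} ∩ Set.Ico 0 1
      = Set.Ico (max (d - ⌈d⌉ + 1 - x) 0) (d - ⌈d⌉ + 1)
        ∪ Set.Ico (d - ⌈d⌉ + 2 - x) 1 := by
  have ha0 : (0:ℝ) < d - ⌈d⌉ + 1 := by have := Int.ceil_lt_add_one d; linarith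
  have ha1 : d - (⌈d⌉:ℝ) + 1 ≤ 1 := by have := Int.le_ceil d; linarith
  ext r
  simp only [Set.mem_inter_iff, Set.mem_setOf_eq, Set.mem_Ico, Set.mem_union, max_le_iff]
  constructor
  · rintro ⟨⟨q, h1, h2⟩, hr0, hr1⟩
    have hqu : q ≤ ⌈d⌉ - 1 := by
      have h : (q:ℝ) < (⌈d⌉:ℝ) := lt_of_lt_of_le (by linarith) (Int.le_ceil d)
      have : q < ⌈d⌉ := by exact_mod_cast h
      omega
    have hql : ⌈d⌉ - 2 ≤ q := by
      have h : ((⌈d⌉:ℤ):ℝ) - 2 < (q:ℝ) + 1 := by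
        have := Int.ceil_lt_add_one d; push_cast; linarith
      have : (⌈d⌉:ℤ) - 2 < q + 1 := by exact_mod_cast h
      omega
    rcases (by omega : q = ⌈d⌉ - 1 ∨ q = ⌈d⌉ - 2) with hq | hq
    · left
      subst hq; push_cast at h1 h2
      exact ⟨⟨by linarith, hr0⟩, by linarith⟩
    · right
      subst hq; push_cast at h1 h2
      exact ⟨by linarith, hr1⟩
  · rintro (⟨⟨hl, hr0⟩, hu⟩ | ⟨hl, hu⟩)
    · refine ⟨⟨⌈d⌉ - 1, ?_, ?_⟩, hr0, by linarith⟩ <;> push_cast <;> linarith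
    · refine ⟨⟨⌈d⌉ - 2, ?_, ?_⟩, by linarith, hu⟩ <;> push_cast <;> linarith

/-- The bin-membership set has Lebesgue measure exactly `x` within `[0,1)`. -/
lemma binSet_volume (x d : ℝ) (hx0 : 0 ≤ x) (hx1 : x ≤ 1) :
    volume ({r : ℝ | ∃ q : ℤ, d - x ≤ q + r ∧ (q : ℝ) + r < d} ∩ Set.Ico 0 1)
      = ENNReal.ofReal x := by
  have ha0 : (0:ℝ) < d - ⌈d⌉ + 1 := by have := Int.ceil_lt_add_one d; linarith
  have ha1 : d - (⌈d⌉:ℝ) + 1 ≤ 1 := by have := Int.le_ceil d; linarith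
  rw [binSet_inter_eq x d hx0 hx1]
  set a : ℝ := d - ⌈d⌉ + 1 with ha
  have hdisj : Disjoint (Set.Ico (max (a - x) 0) a) (Set.Ico (a + 1 - x) 1) := by
    rw [Set.disjoint_left]
    rintro r ⟨-, h2⟩ ⟨h3, -⟩
    linarith
  have hrw : d - (⌈d⌉:ℝ) + 2 - x = a + 1 - x := by rw [ha]; ring
  rw [hrw, measure_union hdisj measurableSet_Ico, Real.volume_Ico, Real.volume_Ico]
  rcases le_or_gt x a with hxa | hax
  · have h1 : max (a - x) 0 = a - x := max_eq_left (by linarith)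
    have h2 : ENNReal.ofReal (1 - (a + 1 - x)) = 0 :=
      ENNReal.ofReal_of_nonpos (by linarith)
    rw [h1, h2, add_zero]
    congr 1; ring
  · have h1 : max (a - x) 0 = 0 := max_eq_right (by linarith)
    rw [h1, sub_zero, ← ENNReal.ofReal_add ha0.le (by linarith)]
    congr 1; ring

open Classical in
/-- Averaging over `r ∈ [0,1)`: there is a bin `B_{r*}` whose weight is at
most `Σ_v w(v)·x̂(v)`, where `B_r = {v : ∃ q ∈ ℤ, d_v − x̂_v ≤ q + r < d_v}`. -/
theorem exists_light_bin
    {V : Type*} [Fintype V]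
    (w : V → ℕ) (x d : V → ℝ)
    (hx0 : ∀ v, 0 ≤ x v) (hx1 : ∀ v, x v ≤ 1) :
    ∃ r ∈ Set.Ico (0 : ℝ) 1,
      (∑ v : V, if ∃ q : ℤ, d v - x v ≤ q + r ∧ (q : ℝ) + r < d v then (w v : ℝ) else 0)
        ≤ ∑ v : V, (w v : ℝ) * x v := by
  classical
  set c : ℝ := ∑ v : V, (w v : ℝ) * x v with hc
  set S : V → Set ℝ := fun v => {r | ∃ q : ℤ, d v - x v ≤ q + r ∧ (q : ℝ) + r < d v} with hS
  have hSm : ∀ v, MeasurableSet (S v) := by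
    intro v
    have : S v = ⋃ q : ℤ, Set.Ico (d v - x v - q) (d v - q) := by
      ext r
      simp only [hS, Set.mem_setOf_eq, Set.mem_iUnion, Set.mem_Ico]
      constructor
      · rintro ⟨q, h1, h2⟩; exact ⟨q, by linarith, by linarith⟩
      · rintro ⟨q, h1, h2⟩; exact ⟨q, by linarith, by linarith⟩
    rw [this]
    exact MeasurableSet.iUnion fun q => measurableSet_Ico
  set F : ℝ → ℝ := fun r => ∑ v : V, (S v).indicator (fun _ => (w v : ℝ)) r with hF
  have hFeq : ∀ r : ℝ,
      (∑ v : V, if ∃ q : ℤ, d v - x v ≤ q + r ∧ (q : ℝ) + r < d v then (w v : ℝ) else 0)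
        = F r := by
    intro r
    refine Finset.sum_congr rfl fun v _ => ?_
    simp only [Set.indicator_apply, hS, Set.mem_setOf_eq]
  have hIntv : ∀ v : V, IntegrableOn ((S v).indicator fun _ => (w v : ℝ)) (Set.Ico 0 1) volume := by
    intro v
    rw [IntegrableOn, integrable_indicator_iff (hSm v)]
    refine (integrableOn_const_iff (by finiteness)).mpr (Or.inr ?_)
    calc (volume.restrict (Set.Ico (0:ℝ) 1)) (S v)
        ≤ (volume.restrict (Set.Ico (0:ℝ) 1)) Set.univ := measure_mono (Set.subset_univ _)
      _ = volume (Set.Ico (0:ℝ) 1) := by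
          rw [Measure.restrict_apply_univ]
      _ < ∞ := by rw [Real.volume_Ico]; exact ENNReal.ofReal_lt_top
  have hIntF : IntegrableOn F (Set.Ico 0 1) volume :=
    MeasureTheory.integrable_finset_sum _ fun v _ => hIntv v
  have hvol : volume (Set.Ico (0:ℝ) 1) = 1 := by
    rw [Real.volume_Ico]; norm_num
  have hI : ∫ r in Set.Ico (0:ℝ) 1, F r = c := by
    rw [hF]
    rw [MeasureTheory.integral_finset_sum _ fun v _ => hIntv v]
    refine Finset.sum_congr rfl fun v _ => ?_
    rw [setIntegral_indicator (hSm v), setIntegral_const, Set.inter_comm, measureReal_def,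
      binSet_volume (x v) (d v) (hx0 v) (hx1 v), ENNReal.toReal_ofReal (hx0 v),
      smul_eq_mul, mul_comm]
  by_contra hcon
  push_neg at hcon
  have hpos : ∀ r ∈ Set.Ico (0:ℝ) 1, c < F r := by
    intro r hr
    have := hcon r hr
    rwa [hFeq r] at this
  have hI2 : ∫ r in Set.Ico (0:ℝ) 1, (F r - c) = 0 := by
    rw [integral_sub hIntF ((integrableOn_const_iff (by finiteness)).mpr (Or.inr (by rw [hvol]; exact one_lt_top)))]
    rw [hI, setIntegral_const, measureReal_def, hvol]
    simp
  have hae : (fun r => F r - c) =ᵐ[volume.restrict (Set.Ico (0:ℝ) 1)] 0 := by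
    refine (setIntegral_eq_zero_iff_of_nonneg_ae ?_ ?_).mp hI2
    · rw [Filter.EventuallyLE, ae_restrict_iff' measurableSet_Ico]
      exact Filter.Eventually.of_forall fun r hr => by
        simpa using (hpos r hr).le
    · exact hIntF.sub ((integrableOn_const_iff (by finiteness)).mpr (Or.inr (by rw [hvol]; exact one_lt_top)))
  have hne : volume.restrict (Set.Ico (0:ℝ) 1) ≠ 0 := by
    simp [Measure.restrict_eq_zero, hvol]
  haveI : (ae (volume.restrict (Set.Ico (0:ℝ) 1))).NeBot := ae_neBot.mpr hne
  obtain ⟨r, hr0, hrmem⟩ := (hae.and (ae_restrict_mem measurableSet_Ico)).exists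
  have : c < F r := hpos r hrmem
  simp only [Pi.zero_apply] at hr0
  linarith
end

section
/- Let G be a finite connected simple chordal graph with terminal pairs (s_1,t_1), …, (s_ℓ,t_ℓ). Let x : V(G) → ℝ satisfy x_v ≥ 0 for every v and Σ_{v ∈ V(P)} x_v ≥ 1 for every index i and every simple path P from s_i to t_i. Set x̂_v = 4·x_v and assume x̂_v < 1 for every vertex v. Fix a root ρ ∈ V(G) and for every vertex v let d_v = min over simple paths Q from ρ to v of Σ_{u ∈ V(Q)} x̂_u. For r ∈ [0,1) define the bin B_r = { v ∈ V(G) : there exists an integer q with d_v − x̂_v ≤ q + r < d_v }. Then for every r ∈ [0,1) and every i, the graph G − B_r contains no path from s_i to t_i. -/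
set_option linter.unusedSectionVars false
set_option linter.unusedVariables false
set_option maxHeartbeats 2000000

open SimpleGraph Walk Finset


/-- A finite simple graph is chordal if every cycle with at least 4 vertices has a chord,
i.e. an edge of the graph joining two vertices of the cycle that are not consecutive on the
cycle (equivalently, an edge between cycle vertices that is not an edge of the cycle). -/
def IsChordal {V : Type*} (G : SimpleGraph V) : Prop :=
  ∀ ⦃v : V⦄ (c : G.Walk v v), c.IsCycle → 4 ≤ c.length →
    ∃ a b : V, a ∈ c.support ∧ b ∈ c.support ∧ G.Adj a b ∧ s(a, b) ∉ c.edges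

section helpers

variable {V : Type*} [DecidableEq V] {G : SimpleGraph V}

lemma walk_length_zero {u v : V} (p : G.Walk u v) (h : p.length = 0) : u = v := by
  cases p with
  | nil => rfl
  | cons h' q => simp at h

lemma edge_of_length_one {u v : V} (p : G.Walk u v) (h : p.length = 1) : s(u, v) ∈ p.edges := by
  cases p with
  | nil => simp at h
  | cons h' q =>
    have : q.length = 0 := by simpa using h
    cases q with
    | nil => simp
    | cons h'' q' => simp at this

lemma mem_take_and_drop {a b x v : V} {p : G.Walk a b} (hp : p.IsPath) (hx : x ∈ p.support)
    (h1 : v ∈ (p.takeUntil x hx).support) (h2 : v ∈ (p.dropUntil x hx).support) : v = x := by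
  have hsp : p.support = (p.takeUntil x hx).support ++ (p.dropUntil x hx).support.tail := by
    conv_lhs => rw [← take_spec p hx]
    exact support_append _ _
  have hnd : p.support.Nodup := (isPath_def p).mp hp
  rw [hsp] at hnd
  obtain ⟨-, -, hdisj⟩ := List.nodup_append.mp hnd
  rw [support_eq_cons (p.dropUntil x hx)] at h2
  rcases List.mem_cons.mp h2 with h | h
  · exact h
  · exact absurd rfl (hdisj v h1 v h)

lemma length_take_add_drop {a b x : V} (p : G.Walk a b) (hx : x ∈ p.support) :
    (p.takeUntil x hx).length + (p.dropUntil x hx).length = p.length := by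
  conv_rhs => rw [← take_spec p hx]
  exact (length_append _ _).symm

lemma exists_shortcut {a b x y : V} (p : G.Walk a b) (hp : p.IsPath) (hxy : G.Adj x y)
    (hx : x ∈ p.support) (hy : y ∈ p.support) (he : s(x, y) ∉ p.edges) :
    ∃ q : G.Walk a b, q.IsPath ∧ q.length < p.length ∧ ∀ v ∈ q.support, v ∈ p.support := by
  have hxyne : x ≠ y := hxy.ne
  set A := p.takeUntil x hx with hA
  set B := p.dropUntil x hx with hB
  have hAp : A.IsPath := hp.takeUntil hx
  have hBp : B.IsPath := hp.dropUntil hx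
  have hlen : A.length + B.length = p.length := length_take_add_drop p hx
  have hsp : p.support = A.support ++ B.support.tail := by
    conv_lhs => rw [← take_spec p hx]; exact support_append _ _
  by_cases hyB : y ∈ B.support
  · set B₂ := B.dropUntil y hyB with hB₂
    have hB₂p : B₂.IsPath := hBp.dropUntil hyB
    have hxB₂ : x ∉ B₂.support := by
      intro hmem
      exact hxyne (mem_take_and_drop hBp hyB (start_mem_support _) hmem)
    have hlenB : (B.takeUntil y hyB).length + B₂.length = B.length := length_take_add_drop B hyB
    have htake2 : 2 ≤ (B.takeUntil y hyB).length := by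
      rcases Nat.lt_or_ge (B.takeUntil y hyB).length 2 with h2 | h2
      · interval_cases h : (B.takeUntil y hyB).length
        · exact absurd (walk_length_zero _ h) hxyne
        · exact absurd (edges_dropUntil_subset p hx (edges_takeUntil_subset B hyB
            (edge_of_length_one _ h))) he
      · exact h2
    refine ⟨A.append (Walk.cons hxy B₂), ?_, ?_, ?_⟩
    · rw [isPath_def, support_append, support_cons]
      simp only [List.tail_cons]
      rw [List.nodup_append]
      refine ⟨(isPath_def A).mp hAp, (isPath_def B₂).mp hB₂p, ?_⟩
      intro v hvA w hvB₂ hvw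
      subst hvw
      have := mem_take_and_drop hp hx hvA (support_dropUntil_subset B hyB hvB₂)
      subst this
      exact hxB₂ hvB₂
    · rw [length_append, length_cons]
      omega
    · intro v hv
      rcases (mem_support_append_iff _ _).mp hv with h | h
      · exact support_takeUntil_subset p hx h
      · rw [support_cons] at h
        rcases List.mem_cons.mp h with h | h
        · subst h; exact hx
        · exact support_dropUntil_subset p hx (support_dropUntil_subset B hyB h)
  · have hyA : y ∈ A.support := by
      rw [hsp] at hy
      rcases List.mem_append.mp hy with h | h
      · exact h
      · exact absurd (List.mem_of_mem_tail h) hyB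
    set A₁ := A.takeUntil y hyA with hA₁
    have hA₁p : A₁.IsPath := hAp.takeUntil hyA
    have hxA₁ : x ∉ A₁.support := by
      intro hmem
      exact hxyne (mem_take_and_drop hAp hyA hmem (end_mem_support _))
    have hlenA : A₁.length + (A.dropUntil y hyA).length = A.length := length_take_add_drop A hyA
    have hdrop2 : 2 ≤ (A.dropUntil y hyA).length := by
      rcases Nat.lt_or_ge (A.dropUntil y hyA).length 2 with h2 | h2
      · interval_cases h : (A.dropUntil y hyA).length
        · exact absurd (walk_length_zero _ h).symm hxyne
        · have := edges_takeUntil_subset p hx (edges_dropUntil_subset A hyA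
            (edge_of_length_one _ h))
          rw [Sym2.eq_swap] at this
          exact absurd this he
      · exact h2
    refine ⟨A₁.append (Walk.cons hxy.symm B), ?_, ?_, ?_⟩
    · rw [isPath_def, support_append, support_cons]
      simp only [List.tail_cons]
      rw [List.nodup_append]
      refine ⟨(isPath_def A₁).mp hA₁p, (isPath_def B).mp hBp, ?_⟩
      intro v hvA₁ w hvB hvw
      subst hvw
      have := mem_take_and_drop hp hx (support_takeUntil_subset A hyA hvA₁) hvB
      subst this
      exact hxA₁ hvA₁
    · rw [length_append, length_cons]
      omega
    · intro v hv
      rcases (mem_support_append_iff _ _).mp hv with h | h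
      · exact support_takeUntil_subset p hx (support_takeUntil_subset A hyA h)
      · rw [support_cons] at h
        rcases List.mem_cons.mp h with h | h
        · subst h; exact hy
        · exact support_dropUntil_subset p hx h

/-- Key chordality lemma: two non-adjacent vertices `u₁ ≠ u₂`, each adjacent to an end of a
path `π`, avoiding `π`, and joined by a path whose internal vertices avoid the closed
neighbourhood of `π`, must be adjacent. -/
lemma chordal_connector (hG : IsChordal G) :
    ∀ (n : ℕ) {w₁ w₂ u₁ u₂ : V} (π : G.Walk w₁ w₂) (Z : G.Walk u₁ u₂),
      π.length + Z.length ≤ n → π.IsPath → Z.IsPath → u₁ ≠ u₂ →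
      G.Adj u₁ w₁ → G.Adj u₂ w₂ →
      u₁ ∉ π.support → u₂ ∉ π.support →
      (∀ z ∈ Z.support, z ≠ u₁ → z ≠ u₂ → z ∉ π.support ∧ ∀ c ∈ π.support, ¬ G.Adj z c) →
      G.Adj u₁ u₂ := by
  intro n
  induction n with
  | zero =>
    intro w₁ w₂ u₁ u₂ π Z hn hπ hZp hne h1 h2 hu1π hu2π hZ
    exact absurd (walk_length_zero Z (by omega)) hne
  | succ n ih =>
    intro w₁ w₂ u₁ u₂ π Z hn hπ hZp hne h1 h2 hu1π hu2π hZ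
    rcases Nat.lt_or_ge Z.length 2 with hZlt | hZ2
    · interval_cases hZl : Z.length
      · exact absurd (walk_length_zero Z hZl) hne
      · exact Z.edges_subset_edgeSet (edge_of_length_one Z hZl)
    have hZsubπ : ∀ z ∈ Z.support, z ∉ π.support := by
      intro z hz
      by_cases hz1 : z = u₁
      · subst hz1; exact hu1π
      by_cases hz2 : z = u₂
      · subst hz2; exact hu2π
      exact (hZ z hz hz1 hz2).1
    have hξp : (Walk.cons h2.symm Z.reverse).IsPath := by
      rw [cons_isPath_iff]
      refine ⟨hZp.reverse, fun hmem => ?_⟩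
      rw [support_reverse, List.mem_reverse] at hmem
      exact hZsubπ w₂ hmem (end_mem_support π)
    set W := π.append (Walk.cons h2.symm Z.reverse) with hWdef
    have hWsupp : W.support = π.support ++ Z.reverse.support := by
      rw [hWdef, support_append, support_cons, List.tail_cons]
    have hWp : W.IsPath := by
      rw [isPath_def, hWsupp, List.nodup_append]
      refine ⟨(isPath_def π).mp hπ, ?_, ?_⟩
      · rw [support_reverse, List.nodup_reverse]; exact (isPath_def Z).mp hZp
      · intro v hvπ w hvZ hvw
        subst hvw
        rw [support_reverse, List.mem_reverse] at hvZ
        exact hZsubπ v hvZ hvπ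
    have hW_edge : s(u₁, w₁) ∉ W.edges := by
      rw [hWdef, edges_append, edges_cons]
      intro hmem
      rcases List.mem_append.mp hmem with h | h
      · exact hu1π (Walk.fst_mem_support_of_mem_edges π h)
      · rcases List.mem_cons.mp h with h | h
        · rcases Sym2.eq_iff.mp h with ⟨ha, hb⟩ | ⟨ha, hb⟩
          · exact hu1π (ha ▸ end_mem_support π)
          · exact hne ha
        · rw [edges_reverse, List.mem_reverse] at h
          exact hZsubπ w₁ (Walk.snd_mem_support_of_mem_edges Z h) (start_mem_support π)
    set O := Walk.cons h1 W with hOdef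
    have hOc : O.IsCycle := (cons_isCycle_iff W h1).mpr ⟨hWp, hW_edge⟩
    have hOlen : 4 ≤ O.length := by
      rw [hOdef, length_cons, hWdef, length_append, length_cons, length_reverse]
      omega
    obtain ⟨a, b, ha, hb, hab, habe⟩ := hG O hOc hOlen
    have hOedges : O.edges = s(u₁, w₁) :: (π.edges ++ (s(w₂, u₂) :: Z.reverse.edges)) := by
      rw [hOdef, edges_cons, hWdef, edges_append, edges_cons]
    have hne_e0 : s(a, b) ≠ s(u₁, w₁) := by
      intro h; apply habe; rw [hOedges, h]; exact List.mem_cons_self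
    have hnπ : s(a, b) ∉ π.edges := fun h => habe (by
      rw [hOedges]; exact List.mem_cons_of_mem _ (List.mem_append_left _ h))
    have hne_e1 : s(a, b) ≠ s(w₂, u₂) := fun h => habe (by
      rw [hOedges, h]
      exact List.mem_cons_of_mem _ (List.mem_append_right _ List.mem_cons_self))
    have hnZ : s(a, b) ∉ Z.edges := fun h => habe (by
      rw [hOedges]
      refine List.mem_cons_of_mem _ (List.mem_append_right _ (List.mem_cons_of_mem _ ?_))
      rw [edges_reverse, List.mem_reverse]; exact h)
    have hclass : ∀ c ∈ O.support,
        c ∈ π.support ∨ c = u₁ ∨ c = u₂ ∨ (c ∈ Z.support ∧ c ≠ u₁ ∧ c ≠ u₂) := by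
      intro c hc
      rw [hOdef, support_cons] at hc
      rcases List.mem_cons.mp hc with h | h
      · right; left; exact h
      · rw [hWsupp] at h
        rcases List.mem_append.mp h with h | h
        · left; exact h
        · rw [support_reverse, List.mem_reverse] at h
          by_cases hc1 : c = u₁
          · right; left; exact hc1
          by_cases hc2 : c = u₂
          · right; right; left; exact hc2
          · right; right; right; exact ⟨h, hc1, hc2⟩
    -- reduction steps
    have red_ππ : ∀ {c₁ c₂ : V}, G.Adj c₁ c₂ → c₁ ∈ π.support → c₂ ∈ π.support →
        s(c₁, c₂) ∉ π.edges → G.Adj u₁ u₂ := by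
      intro c₁ c₂ hadj hc₁ hc₂ hce
      obtain ⟨π', hπ'p, hπ'len, hπ'sub⟩ := exists_shortcut π hπ hadj hc₁ hc₂ hce
      refine ih π' Z (by omega) hπ'p hZp hne h1 h2 (fun h => hu1π (hπ'sub _ h))
        (fun h => hu2π (hπ'sub _ h)) ?_
      intro z hz hz1 hz2
      obtain ⟨hz3, hz4⟩ := hZ z hz hz1 hz2
      exact ⟨fun h => hz3 (hπ'sub _ h), fun c hc => hz4 c (hπ'sub _ hc)⟩
    have red_u1π : ∀ {c : V}, G.Adj u₁ c → (hcπ : c ∈ π.support) → c ≠ w₁ → G.Adj u₁ u₂ := by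
      intro c hadj hcπ hcw
      have hlt : (π.dropUntil c hcπ).length < π.length := by
        have h1' := length_take_add_drop π hcπ
        have : (π.takeUntil c hcπ).length ≠ 0 := fun h =>
          hcw (walk_length_zero _ h).symm
        omega
      refine ih (π.dropUntil c hcπ) Z (by omega) (hπ.dropUntil hcπ) hZp hne hadj h2
        (fun h => hu1π (support_dropUntil_subset π hcπ h))
        (fun h => hu2π (support_dropUntil_subset π hcπ h)) ?_
      intro z hz hz1 hz2
      obtain ⟨hz3, hz4⟩ := hZ z hz hz1 hz2
      exact ⟨fun h => hz3 (support_dropUntil_subset π hcπ h),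
        fun c' hc' => hz4 c' (support_dropUntil_subset π hcπ hc')⟩
    have red_u2π : ∀ {c : V}, G.Adj u₂ c → (hcπ : c ∈ π.support) → c ≠ w₂ → G.Adj u₁ u₂ := by
      intro c hadj hcπ hcw
      have hlt : (π.takeUntil c hcπ).length < π.length := by
        have h1' := length_take_add_drop π hcπ
        have : (π.dropUntil c hcπ).length ≠ 0 := fun h =>
          hcw (walk_length_zero _ h)
        omega
      refine ih (π.takeUntil c hcπ) Z (by omega) (hπ.takeUntil hcπ) hZp hne h1 hadj
        (fun h => hu1π (support_takeUntil_subset π hcπ h))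
        (fun h => hu2π (support_takeUntil_subset π hcπ h)) ?_
      intro z hz hz1 hz2
      obtain ⟨hz3, hz4⟩ := hZ z hz hz1 hz2
      exact ⟨fun h => hz3 (support_takeUntil_subset π hcπ h),
        fun c' hc' => hz4 c' (support_takeUntil_subset π hcπ hc')⟩
    have red_u1Z : ∀ {z : V}, G.Adj u₁ z → (hz : z ∈ Z.support) → z ≠ u₁ → z ≠ u₂ →
        s(u₁, z) ∉ Z.edges → G.Adj u₁ u₂ := by
      intro z hadj hz hz1 hz2 hez
      have hu1drop : u₁ ∉ (Z.dropUntil z hz).support := by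
        intro hmem
        exact hz1 (mem_take_and_drop hZp hz (start_mem_support _) hmem).symm
      have hZ'p : (Walk.cons hadj (Z.dropUntil z hz)).IsPath := by
        rw [cons_isPath_iff]
        exact ⟨hZp.dropUntil hz, hu1drop⟩
      have hlt : (Walk.cons hadj (Z.dropUntil z hz)).length < Z.length := by
        rw [length_cons]
        have h1' := length_take_add_drop Z hz
        have htk : (Z.takeUntil z hz).length ≠ 0 := fun h =>
          hz1 (walk_length_zero _ h).symm
        have htk1 : (Z.takeUntil z hz).length ≠ 1 := fun h =>
          hez (edges_takeUntil_subset Z hz (edge_of_length_one _ h))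
        omega
      refine ih π (Walk.cons hadj (Z.dropUntil z hz)) (by omega) hπ hZ'p hne h1 h2 hu1π hu2π ?_
      intro z' hz' hz'1 hz'2
      rw [support_cons] at hz'
      rcases List.mem_cons.mp hz' with h | h
      · exact absurd h hz'1
      · exact hZ z' (support_dropUntil_subset Z hz h) hz'1 hz'2
    have red_u2Z : ∀ {z : V}, G.Adj z u₂ → (hz : z ∈ Z.support) → z ≠ u₁ → z ≠ u₂ →
        s(z, u₂) ∉ Z.edges → G.Adj u₁ u₂ := by
      intro z hadj hz hz1 hz2 hez
      have hu2take : u₂ ∉ (Z.takeUntil z hz).support := by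
        intro hmem
        exact hz2 (mem_take_and_drop hZp hz hmem (end_mem_support _)).symm
      set Z' := (Z.takeUntil z hz).append (Walk.cons hadj Walk.nil) with hZ'def
      have hZ'p : Z'.IsPath := by
        rw [isPath_def, hZ'def, support_append, support_cons]
        simp only [support_nil, List.tail_cons]
        rw [List.nodup_append]
        refine ⟨(isPath_def _).mp (hZp.takeUntil hz), List.nodup_singleton _, ?_⟩
        intro v hv1 w hv2 hvw
        subst hvw
        rw [List.mem_singleton] at hv2
        subst hv2
        exact hu2take hv1
      have hlt : Z'.length < Z.length := by
        rw [hZ'def, length_append, length_cons, length_nil]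
        have h1' := length_take_add_drop Z hz
        have hdk : (Z.dropUntil z hz).length ≠ 0 := fun h =>
          hz2 (walk_length_zero _ h)
        have hdk1 : (Z.dropUntil z hz).length ≠ 1 := fun h =>
          hez (edges_dropUntil_subset Z hz (edge_of_length_one _ h))
        omega
      refine ih π Z' (by omega) hπ hZ'p hne h1 h2 hu1π hu2π ?_
      intro z' hz' hz'1 hz'2
      rw [hZ'def, mem_support_append_iff] at hz'
      rcases hz' with h | h
      · exact hZ z' (support_takeUntil_subset Z hz h) hz'1 hz'2
      · rw [support_cons] at h
        rcases List.mem_cons.mp h with h | h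
        · subst h; exact hZ z' hz hz'1 hz'2
        · simp only [support_nil, List.mem_singleton] at h
          exact absurd h hz'2
    have red_ZZ : ∀ {z z' : V}, G.Adj z z' → z ∈ Z.support → z' ∈ Z.support →
        s(z, z') ∉ Z.edges → G.Adj u₁ u₂ := by
      intro z z' hadj hz hz' hez
      obtain ⟨Z'', hZ''p, hZ''len, hZ''sub⟩ := exists_shortcut Z hZp hadj hz hz' hez
      refine ih π Z'' (by omega) hπ hZ''p hne h1 h2 hu1π hu2π ?_
      intro y hy hy1 hy2
      exact hZ y (hZ''sub _ hy) hy1 hy2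
    -- the big case bash
    have swap : s(b, a) = s(a, b) := Sym2.eq_swap
    rcases hclass a ha with haπ | ha1 | ha2 | ⟨haZ, ha1, ha2⟩ <;>
      rcases hclass b hb with hbπ | hb1 | hb2 | ⟨hbZ, hb1, hb2⟩
    · exact red_ππ hab haπ hbπ hnπ
    · -- a ∈ π, b = u₁
      subst hb1
      refine red_u1π hab.symm haπ (fun h => ?_)
      subst h
      exact hne_e0 (by rw [Sym2.eq_swap])
    · subst hb2
      refine red_u2π hab.symm haπ (fun h => ?_)
      subst h
      exact hne_e1 rfl
    · exact absurd hab.symm ((hZ b hbZ hb1 hb2).2 a haπ)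
    · subst ha1
      refine red_u1π hab hbπ (fun h => ?_)
      subst h
      exact hne_e0 rfl
    · subst ha1; subst hb1; exact absurd rfl hab.ne
    · subst ha1; subst hb2; exact hab
    · subst ha1
      exact red_u1Z hab hbZ hb1 hb2 hnZ
    · subst ha2
      refine red_u2π hab hbπ (fun h => ?_)
      subst h
      exact hne_e1 (by rw [Sym2.eq_swap])
    · subst ha2; subst hb1; exact hab.symm
    · subst ha2; subst hb2; exact absurd rfl hab.ne
    · subst ha2
      refine red_u2Z hab.symm hbZ hb1 hb2 ?_
      rw [Sym2.eq_swap]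
      exact hnZ
    · exact absurd hab ((hZ a haZ ha1 ha2).2 b hbπ)
    · subst hb1
      refine red_u1Z hab.symm haZ ha1 ha2 ?_
      rw [Sym2.eq_swap]
      exact hnZ
    · subst hb2
      exact red_u2Z hab haZ ha1 ha2 hnZ
    · exact red_ZZ hab haZ hbZ hnZ

variable {V : Type*} [DecidableEq V] {G : SimpleGraph V}

lemma sum_union_le' {f : V → ℝ} (hf : ∀ v, 0 ≤ f v) {s t u : Finset V}
    (h : s ⊆ t ∪ u) : ∑ v ∈ s, f v ≤ ∑ v ∈ t, f v + ∑ v ∈ u, f v := by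
  calc ∑ v ∈ s, f v ≤ ∑ v ∈ t ∪ u, f v :=
        Finset.sum_le_sum_of_subset_of_nonneg h (fun i _ _ => hf i)
    _ = ∑ v ∈ t ∪ (u \ t), f v := by rw [Finset.union_sdiff_self_eq_union]
    _ = ∑ v ∈ t, f v + ∑ v ∈ u \ t, f v := Finset.sum_union Finset.disjoint_sdiff
    _ ≤ ∑ v ∈ t, f v + ∑ v ∈ u, f v := by
        have := Finset.sum_le_sum_of_subset_of_nonneg
          (Finset.sdiff_subset (s := u) (t := t)) (fun i _ _ => hf i)
        linarith

/-- Split a walk from a vertex satisfying `S` to one not satisfying it, at the last vertex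
satisfying `S`. -/
lemma exists_exit {a b : V} (W : G.Walk a b) (S : V → Prop) (hb : ¬ S b) :
    (∀ v ∈ W.support, ¬ S v) ∨
    ∃ (u w : V) (e : G.Adj u w) (W₁ : G.Walk a u) (W₂ : G.Walk w b),
      S u ∧ (∀ v ∈ W₂.support, ¬ S v) ∧ W₁.append (Walk.cons e W₂) = W := by
  induction W with
  | nil =>
    left; intro v hv
    rw [support_nil, List.mem_singleton] at hv; subst hv; exact hb
  | @cons c c' b' h p ih =>
    rcases ih hb with hall | ⟨u, w, e, W₁, W₂, hu, hW₂, hEq⟩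
    · by_cases hs : S c
      · right; exact ⟨c, c', h, Walk.nil, p, hs, hall, by rw [nil_append]⟩
      · left; intro v hv
        rw [support_cons] at hv
        rcases List.mem_cons.mp hv with h' | h'
        · subst h'; exact hs
        · exact hall v h'
    · right
      exact ⟨u, w, e, Walk.cons h W₁, W₂, hu, hW₂, by rw [cons_append, hEq]⟩
end helpers

/-- In a connected chordal graph with a fractional multicut solution `x`,
set `x̂ = 4x` (assumed `< 1` everywhere) and let `d_v` be the minimum `x̂`-length of a simple
path from the root `ρ` to `v`. Then for every `r ∈ [0,1)` every simple path between a
terminal pair meets the bin `B_r = {v : ∃ q ∈ ℤ, d_v − x̂_v ≤ q + r < d_v}`, i.e. removing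
`B_r` disconnects every terminal pair. -/
theorem chordal_bins_are_multicuts
    {V : Type*} [Fintype V] [DecidableEq V]
    (G : SimpleGraph V) (hconn : G.Connected) (hG : IsChordal G)
    {ℓ : ℕ} (s t : Fin ℓ → V)
    (x : V → ℝ) (hx0 : ∀ v, 0 ≤ x v)
    (hcov : ∀ (i : Fin ℓ) (P : G.Walk (s i) (t i)), P.IsPath →
      1 ≤ ∑ v ∈ P.support.toFinset, x v)
    (xh : V → ℝ) (hxh : ∀ v, xh v = 4 * x v) (hxh1 : ∀ v, xh v < 1)
    (ρ : V) (d : V → ℝ)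
    (hdle : ∀ (v : V) (Q : G.Walk ρ v), Q.IsPath → d v ≤ ∑ u ∈ Q.support.toFinset, xh u)
    (hdeq : ∀ v : V, ∃ Q : G.Walk ρ v, Q.IsPath ∧ d v = ∑ u ∈ Q.support.toFinset, xh u)
    (r : ℝ) (hr : r ∈ Set.Ico (0 : ℝ) 1) :
    ∀ (i : Fin ℓ) (P : G.Walk (s i) (t i)), P.IsPath →
      ∃ v ∈ P.support, ∃ q : ℤ, d v - xh v ≤ q + r ∧ (q : ℝ) + r < d v := by
  have hxh0 : ∀ v, 0 ≤ xh v := fun v => by rw [hxh v]; linarith [hx0 v]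
  -- adjacency bound for d
  have hd_adj : ∀ u v : V, G.Adj u v → d v ≤ d u + xh v := by
    intro u v huv
    obtain ⟨Q, hQp, hQs⟩ := hdeq u
    have hle := hdle v (Q.append (Walk.cons huv Walk.nil)).bypass
      (Q.append (Walk.cons huv Walk.nil)).bypass_isPath
    refine hle.trans ?_
    have hsub : (Q.append (Walk.cons huv Walk.nil)).bypass.support.toFinset ⊆
        Q.support.toFinset ∪ {v} := by
      intro z hz
      rw [List.mem_toFinset] at hz
      have hz' := support_bypass_subset _ hz
      rw [mem_support_append_iff] at hz'
      rcases hz' with h | h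
      · exact Finset.mem_union_left _ (List.mem_toFinset.mpr h)
      · rw [support_cons] at h
        rcases List.mem_cons.mp h with h | h
        · subst h
          exact Finset.mem_union_left _ (List.mem_toFinset.mpr (end_mem_support Q))
        · rw [support_nil, List.mem_singleton] at h
          subst h
          exact Finset.mem_union_right _ (Finset.mem_singleton_self _)
    have := sum_union_le' hxh0 hsub
    rw [Finset.sum_singleton] at this
    linarith [hQs ▸ this]
  -- vertices on a d-realizing path other than the endpoint are deep
  have deep : ∀ (u : V) (Q : G.Walk ρ u), Q.IsPath →
      d u = ∑ w ∈ Q.support.toFinset, xh w →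
      ∀ z ∈ Q.support, z ≠ u → d z ≤ d u - xh u := by
    intro u Q hQp hQs z hz hzu
    have hdz : d z ≤ ∑ w ∈ (Q.takeUntil z hz).support.toFinset, xh w :=
      hdle z _ (hQp.takeUntil hz)
    have hsp : Q.support = (Q.takeUntil z hz).support ++ (Q.dropUntil z hz).support.tail := by
      conv_lhs => rw [← take_spec Q hz]
      exact support_append _ _
    obtain ⟨h1, h2, h3⟩ := List.nodup_append.mp (hsp ▸ (isPath_def Q).mp hQp)
    have hsplit : ∑ w ∈ Q.support.toFinset, xh w =
        ∑ w ∈ (Q.takeUntil z hz).support.toFinset, xh w +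
        ∑ w ∈ (Q.dropUntil z hz).support.tail.toFinset, xh w := by
      rw [hsp, List.toFinset_append,
        Finset.sum_union (List.disjoint_toFinset_iff_disjoint.mpr (List.disjoint_iff_ne.mpr h3))]
    have humem : u ∈ (Q.dropUntil z hz).support.tail := by
      have hu := end_mem_support (Q.dropUntil z hz)
      rw [support_eq_cons] at hu
      rcases List.mem_cons.mp hu with h | h
      · exact absurd h hzu.symm
      · exact h
    have hxu : xh u ≤ ∑ w ∈ (Q.dropUntil z hz).support.tail.toFinset, xh w :=
      Finset.single_le_sum (fun i _ => hxh0 i) (List.mem_toFinset.mpr humem)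
    have := hQs ▸ hsplit
    linarith
  intro i P hP
  by_contra hcon
  push_neg at hcon
  -- levels
  set lev : V → ℤ := fun v => ⌈d v - r⌉ - 1 with hlevdef
  have hpb : ∀ v ∈ P.support, (lev v : ℝ) + r < d v - xh v ∧ d v ≤ (lev v : ℝ) + 1 + r := by
    intro v hv
    have hc1 := Int.ceil_lt_add_one (d v - r)
    have hc2 := Int.le_ceil (d v - r)
    have hql : (lev v : ℝ) + r < d v := by
      simp only [hlevdef]
      push_cast
      linarith
    have hqu : d v ≤ (lev v : ℝ) + 1 + r := by
      simp only [hlevdef]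
      push_cast
      linarith
    refine ⟨?_, hqu⟩
    by_contra hle
    push_neg at hle
    have := hcon v hv (lev v) hle
    linarith
  have hstep : ∀ u v : V, G.Adj u v → u ∈ P.support → v ∈ P.support → lev v = lev u := by
    intro u v huv hu hv
    obtain ⟨hul, huu⟩ := hpb u hu
    obtain ⟨hvl, hvu⟩ := hpb v hv
    have h1 := hd_adj u v huv
    have h2 := hd_adj v u huv.symm
    have hq1 : (lev v : ℝ) < (lev u : ℝ) + 1 := by linarith [hxh0 u, hxh0 v]
    have hq2 : (lev u : ℝ) < (lev v : ℝ) + 1 := by linarith [hxh0 u, hxh0 v]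
    have hq1' : lev v < lev u + 1 := by exact_mod_cast hq1
    have hq2' : lev u < lev v + 1 := by exact_mod_cast hq2
    omega
  have hconst : ∀ v ∈ P.support, lev v = lev (s i) := by
    have haux : ∀ {a b : V} (W : G.Walk a b), (∀ v ∈ W.support, v ∈ P.support) →
        ∀ v ∈ W.support, lev v = lev a := by
      intro a b W
      induction W with
      | nil =>
        intro _ v hv
        rw [support_nil, List.mem_singleton] at hv
        subst hv; rfl
      | @cons c c' b' h p ih =>
        intro hsub v hv
        have hcP : c ∈ P.support := hsub c (by rw [support_cons]; exact List.mem_cons_self)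
        have hc'P : c' ∈ P.support := hsub c'
          (by rw [support_cons]; exact List.mem_cons_of_mem _ (start_mem_support p))
        have hac : lev c' = lev c := hstep c c' h hcP hc'P
        rw [support_cons] at hv
        rcases List.mem_cons.mp hv with h' | h'
        · subst h'; rfl
        · rw [ih (fun z hz => hsub z (by rw [support_cons]; exact List.mem_cons_of_mem _ hz))
            v h', hac]
    exact haux P (fun z hz => hz)
  set R : ℝ := (lev (s i) : ℝ) + r with hRdef
  have hPlow : ∀ v ∈ P.support, R < d v - xh v := by
    intro v hv
    have := (hpb v hv).1
    rw [hconst v hv] at this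
    exact this
  have hPup : ∀ v ∈ P.support, d v ≤ R + 1 := by
    intro v hv
    have := (hpb v hv).2
    rw [hconst v hv] at this
    linarith
  have hs_mem : s i ∈ P.support := start_mem_support P
  have ht_mem : t i ∈ P.support := end_mem_support P
  -- the killer: a cheap s-t walk contradicts the covering constraint
  have hkill : ∀ (F : G.Walk (s i) (t i)),
      ∑ v ∈ F.bypass.support.toFinset, xh v < 4 → False := by
    intro F hF
    have h1 := hcov i F.bypass F.bypass_isPath
    have h4 : ∑ v ∈ F.bypass.support.toFinset, xh v =
        4 * ∑ v ∈ F.bypass.support.toFinset, x v := by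
      rw [Finset.mul_sum]
      exact Finset.sum_congr rfl fun v _ => hxh v
    linarith
  obtain ⟨Qs, hQsp, hQss⟩ := hdeq (s i)
  obtain ⟨Qt, hQtp, hQts⟩ := hdeq (t i)
  rcases lt_or_ge R 0 with hR | hR
  · -- negative case: route through the root
    refine hkill (Qs.reverse.append Qt) ?_
    have hsub : (Qs.reverse.append Qt).bypass.support.toFinset ⊆
        Qs.support.toFinset ∪ Qt.support.toFinset := by
      intro z hz
      rw [List.mem_toFinset] at hz
      have hz' := support_bypass_subset _ hz
      rw [mem_support_append_iff] at hz'
      rcases hz' with h | h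
      · rw [support_reverse, List.mem_reverse] at h
        exact Finset.mem_union_left _ (List.mem_toFinset.mpr h)
      · exact Finset.mem_union_right _ (List.mem_toFinset.mpr h)
    have hb := sum_union_le' hxh0 hsub
    have hds := hPup _ hs_mem
    have hdt := hPup _ ht_mem
    rw [← hQss, ← hQts] at hb
    linarith
  -- main case
  have hρS : d ρ - xh ρ ≤ R := by
    have hdρ : d ρ ≤ xh ρ := by
      have := hdle ρ Walk.nil IsPath.nil
      simpa using this
    linarith
  have hsS : ¬ (d (s i) - xh (s i) ≤ R) := by
    push_neg
    exact hPlow _ hs_mem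
  have htS : ¬ (d (t i) - xh (t i) ≤ R) := by
    push_neg
    exact hPlow _ ht_mem
  rcases exists_exit Qs (fun u => d u - xh u ≤ R) hsS with hall | ⟨u₁, w₁, e₁, W₁, W₂, hu₁, hW₂, hEq₁⟩
  · exact hall ρ (start_mem_support Qs) hρS
  rcases exists_exit Qt (fun u => d u - xh u ≤ R) htS with hall | ⟨u₂, w₂, e₂, W₁', W₂', hu₂, hW₂', hEq₂⟩
  · exact hall ρ (start_mem_support Qt) hρS
  -- cheapness of the two tails
  have hside : ∀ {u w : V} (e : G.Adj u w) (A : G.Walk ρ u) (B : G.Walk w (s i))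
      (hQp' : Qs.IsPath) (hEq : A.append (Walk.cons e B) = Qs)
      (hB : ∀ v ∈ B.support, ¬ (d v - xh v ≤ R)), True → True := fun _ _ _ _ _ _ _ => trivial
  -- s-side sums
  have tail_small : ∀ {c c' : V} {u w : V} (e : G.Adj u w) (A : G.Walk ρ u) (B : G.Walk w c)
      (Q : G.Walk ρ c) (hQp' : Q.IsPath) (hQs' : d c = ∑ v ∈ Q.support.toFinset, xh v)
      (_ : A.append (Walk.cons e B) = Q)
      (hB : ∀ v ∈ B.support, ¬ (d v - xh v ≤ R)) (hdc : d c ≤ R + 1),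
      ∑ v ∈ B.support.toFinset, xh v < 1 := by
    intro c c' u w e A B Q hQp' hQs' hEq hB hdc
    have hsp : Q.support = A.support ++ B.support := by
      rw [← hEq, support_append, support_cons, List.tail_cons]
    obtain ⟨hndA, hndB, hdisj⟩ := List.nodup_append.mp (hsp ▸ (isPath_def Q).mp hQp')
    have hsum : d c = ∑ v ∈ A.support.toFinset, xh v + ∑ v ∈ B.support.toFinset, xh v := by
      rw [hQs', hsp, List.toFinset_append,
        Finset.sum_union (List.disjoint_toFinset_iff_disjoint.mpr (List.disjoint_iff_ne.mpr hdisj))]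
    have hwA : w ∉ A.support := fun h => hdisj w h w (start_mem_support B) rfl
    have hconcatp : (A.concat e).IsPath := by
      rw [isPath_def, support_concat, List.nodup_append]
      exact ⟨hndA, List.nodup_singleton _, fun v hv w' hv' hvw => by
        rw [List.mem_singleton] at hv'; exact hwA (by rw [← hv', ← hvw]; exact hv)⟩
    have hdw : d w ≤ ∑ v ∈ A.support.toFinset, xh v + xh w := by
      have hle := hdle w (A.concat e) hconcatp
      refine hle.trans ?_
      have hsub : (A.concat e).support.toFinset ⊆ A.support.toFinset ∪ {w} := by
        rw [support_concat]
        intro z hz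
        rw [List.mem_toFinset, List.mem_append] at hz
        rcases hz with h | h
        · exact Finset.mem_union_left _ (List.mem_toFinset.mpr h)
        · rw [List.mem_singleton] at h; subst h
          exact Finset.mem_union_right _ (Finset.mem_singleton_self _)
      have := sum_union_le' hxh0 hsub
      rw [Finset.sum_singleton] at this
      exact this
    have hwS : ¬ (d w - xh w ≤ R) := hB w (start_mem_support B)
    push_neg at hwS
    linarith
  have hW₂small : ∑ v ∈ W₂.support.toFinset, xh v < 1 :=
    tail_small (c' := ρ) e₁ W₁ W₂ Qs hQsp hQss hEq₁ hW₂ (hPup _ hs_mem)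
  have hW₂'small : ∑ v ∈ W₂'.support.toFinset, xh v < 1 :=
    tail_small (c' := ρ) e₂ W₁' W₂' Qt hQtp hQts hEq₂ hW₂' (hPup _ ht_mem)
  -- the killer specialized to walks through u₁, u₂ and the two tails
  have hkill2 : ∀ (F : G.Walk (s i) (t i)),
      (∀ v ∈ F.support, v ∈ W₂.support ∨ v = u₁ ∨ v = u₂ ∨ v ∈ W₂'.support) → False := by
    intro F hFm
    refine hkill F ?_
    have hsub : F.bypass.support.toFinset ⊆
        (W₂.support.toFinset ∪ {u₁, u₂}) ∪ W₂'.support.toFinset := by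
      intro z hz
      rw [List.mem_toFinset] at hz
      have hzz := hFm z (support_bypass_subset _ hz)
      simp only [Finset.mem_union, Finset.mem_insert, Finset.mem_singleton, List.mem_toFinset]
      tauto
    have h1 := sum_union_le' hxh0 hsub
    have h2 := sum_union_le' hxh0
      (subset_rfl : W₂.support.toFinset ∪ ({u₁, u₂} : Finset V) ⊆
        W₂.support.toFinset ∪ {u₁, u₂})
    have hpair : ∑ v ∈ ({u₁, u₂} : Finset V), xh v ≤ xh u₁ + xh u₂ := by
      by_cases h : u₁ = u₂
      · subst h
        have hpp : ({u₁, u₁} : Finset V) = {u₁} := by simp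
        rw [hpp, Finset.sum_singleton]
        linarith [hxh0 u₁]
      · rw [Finset.sum_pair h]
    have := hxh1 u₁
    have := hxh1 u₂
    linarith
  -- now build a cheap s-t walk
  by_cases huu : u₁ = u₂
  · subst huu
    refine hkill2 (W₂.reverse.append (Walk.cons e₁.symm (Walk.cons e₂ W₂'))) ?_
    intro v hv
    rw [mem_support_append_iff] at hv
    rcases hv with h | h
    · rw [support_reverse, List.mem_reverse] at h
      exact Or.inl h
    · rw [support_cons] at h
      rcases List.mem_cons.mp h with h | h
      · subst h; exact Or.inl (start_mem_support W₂)
      · rw [support_cons] at h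
        rcases List.mem_cons.mp h with h | h
        · subst h; exact Or.inr (Or.inl rfl)
        · exact Or.inr (Or.inr (Or.inr h))
  · -- use the chordality lemma to connect u₁ and u₂
    have hPnotS : ∀ v ∈ P.support, ¬ (d v - xh v ≤ R) := by
      intro v hv; push_neg; exact hPlow v hv
    set κ := W₂.append (P.append W₂'.reverse) with hκdef
    have hκnotS : ∀ v ∈ κ.support, ¬ (d v - xh v ≤ R) := by
      intro v hv
      rw [hκdef, mem_support_append_iff, mem_support_append_iff] at hv
      rcases hv with h | h | h
      · exact hW₂ v h
      · exact hPnotS v h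
      · rw [support_reverse, List.mem_reverse] at h
        exact hW₂' v h
    have hπp : κ.bypass.IsPath := κ.bypass_isPath
    have hπnotS : ∀ v ∈ κ.bypass.support, ¬ (d v - xh v ≤ R) := fun v hv =>
      hκnotS v (support_bypass_subset _ hv)
    obtain ⟨Q₁, hQ₁p, hQ₁s⟩ := hdeq u₁
    obtain ⟨Q₂, hQ₂p, hQ₂s⟩ := hdeq u₂
    have hZp : (Q₁.reverse.append Q₂).bypass.IsPath := bypass_isPath _
    have hu₁' : d u₁ - xh u₁ ≤ R := hu₁
    have hu₂' : d u₂ - xh u₂ ≤ R := hu₂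
    have hdeepZ : ∀ z ∈ (Q₁.reverse.append Q₂).bypass.support, z ≠ u₁ → z ≠ u₂ → d z ≤ R := by
      intro z hz hz1 hz2
      have hz' := support_bypass_subset _ hz
      rw [mem_support_append_iff] at hz'
      rcases hz' with h | h
      · rw [support_reverse, List.mem_reverse] at h
        have := deep u₁ Q₁ hQ₁p hQ₁s z h hz1
        linarith [hxh0 u₁]
      · have := deep u₂ Q₂ hQ₂p hQ₂s z h hz2
        linarith [hxh0 u₂]
    have hZcond : ∀ z ∈ (Q₁.reverse.append Q₂).bypass.support, z ≠ u₁ → z ≠ u₂ →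
        z ∉ κ.bypass.support ∧ ∀ c ∈ κ.bypass.support, ¬ G.Adj z c := by
      intro z hz hz1 hz2
      have hdz := hdeepZ z hz hz1 hz2
      constructor
      · intro hmem
        have hh := hπnotS z hmem
        push_neg at hh
        linarith [hxh0 z]
      · intro c hc hadj
        have hnc := hπnotS c hc
        push_neg at hnc
        have := hd_adj z c hadj
        linarith
    have hu₁π : u₁ ∉ κ.bypass.support := by
      intro h
      have hh := hπnotS u₁ h
      exact hh hu₁'
    have hu₂π : u₂ ∉ κ.bypass.support := by
      intro h
      have hh := hπnotS u₂ h
      exact hh hu₂'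
    have hAdj : G.Adj u₁ u₂ :=
      chordal_connector hG (κ.bypass.length + (Q₁.reverse.append Q₂).bypass.length)
        κ.bypass (Q₁.reverse.append Q₂).bypass le_rfl hπp hZp huu e₁ e₂ hu₁π hu₂π hZcond
    refine hkill2 (W₂.reverse.append (Walk.cons e₁.symm (Walk.cons hAdj (Walk.cons e₂ W₂')))) ?_
    intro v hv
    rw [mem_support_append_iff] at hv
    rcases hv with h | h
    · rw [support_reverse, List.mem_reverse] at h
      exact Or.inl h
    · rw [support_cons] at h
      rcases List.mem_cons.mp h with h | h
      · subst h; exact Or.inl (start_mem_support W₂)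
      · rw [support_cons] at h
        rcases List.mem_cons.mp h with h | h
        · subst h; exact Or.inr (Or.inl rfl)
        · rw [support_cons] at h
          rcases List.mem_cons.mp h with h | h
          · subst h; exact Or.inr (Or.inr (Or.inl rfl))
          · exact Or.inr (Or.inr (Or.inr h))
end

section
/- Let F be a forest and let 𝒫 be a finite family of simple paths in F. If x : V(F) → ℝ satisfies 0 ≤ x_v ≤ 1 for every vertex v and Σ_{v ∈ V(P)} x_v ≥ 1 for every P ∈ 𝒫, then there exists a set S ⊆ V(F) with S ∩ V(P) ≠ ∅ for every P ∈ 𝒫 and |S| ≤ Σ_{v ∈ V(F)} x_v. In particular, in the unweighted case the multicut LP on a forest has an integral optimal solution. -/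
open SimpleGraph Walk

namespace ForestAux

variable {V : Type*} [DecidableEq V] {F : SimpleGraph V}

noncomputable def pb {u v : V} (h : F.Reachable u v) : F.Walk u v := h.some.toPath.1

lemma pb_isPath {u v : V} (h : F.Reachable u v) : (pb h).IsPath := h.some.toPath.2

lemma pb_unique (hF : F.IsAcyclic) {u v : V} (h : F.Reachable u v)
    (p : F.Walk u v) (hp : p.IsPath) : p = pb h :=
  congrArg Subtype.val (hF.path_unique ⟨p, hp⟩ ⟨pb h, pb_isPath h⟩)

lemma dist_eq_of_isPath (hF : F.IsAcyclic) {u v : V} (p : F.Walk u v) (hp : p.IsPath) :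
    F.dist u v = p.length := by
  have hr : F.Reachable u v := ⟨p⟩
  obtain ⟨q, hq, hl⟩ := hr.exists_path_of_dist
  rw [← hl, pb_unique hF hr p hp, pb_unique hF hr q hq]

lemma dist_le_of_mem_support (hF : F.IsAcyclic) {a r w : V} {p : F.Walk a r} (hp : p.IsPath)
    (hw : w ∈ p.support) :
    F.dist w r ≤ F.dist a r ∧ (w ≠ a → F.dist w r < F.dist a r) := by
  have hd : F.dist w r = (p.dropUntil w hw).length :=
    dist_eq_of_isPath hF _ (hp.dropUntil hw)
  have ha : F.dist a r = p.length := dist_eq_of_isPath hF p hp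
  have hsplit : (p.takeUntil w hw).length + (p.dropUntil w hw).length = p.length := by
    rw [← length_append, take_spec]
  constructor
  · omega
  · intro hne
    have h0 : (p.takeUntil w hw).length ≠ 0 :=
      fun h0 => hne (eq_of_length_eq_zero h0).symm
    omega

lemma reachable_of_mem_support {s t u w : V} (p : F.Walk s t) (hu : u ∈ p.support)
    (hw : w ∈ p.support) : F.Reachable u w :=
  ⟨(p.takeUntil u hu).reverse.append (p.takeUntil w hw)⟩

lemma ML (hF : F.IsAcyclic) {s t r a v : V} {W : F.Walk s t} (hW : W.IsPath)
    (ha : a ∈ W.support) (hv : v ∈ W.support) (har : F.Reachable a r)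
    (hmin : ∀ u ∈ W.support, F.dist a r ≤ F.dist u r) (hvr : F.Reachable v r) :
    ∃ seg : F.Walk v a, (∀ u ∈ seg.support, u ∈ W.support) ∧
      pb hvr = seg.append (pb har) := by
  obtain ⟨seg, hsegP, hsegsub⟩ :
      ∃ seg : F.Walk v a, seg.IsPath ∧ ∀ u ∈ seg.support, u ∈ W.support := by
    have ha' := ha
    rw [← take_spec W hv, mem_support_append_iff] at ha'
    rcases ha' with h | h
    · refine ⟨((W.takeUntil v hv).dropUntil a h).reverse,
        ((hW.takeUntil hv).dropUntil h).reverse, fun u hu => ?_⟩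
      rw [support_reverse, List.mem_reverse] at hu
      exact W.support_takeUntil_subset hv (support_dropUntil_subset _ h hu)
    · exact ⟨(W.dropUntil v hv).takeUntil a h, (hW.dropUntil hv).takeUntil h,
        fun u hu => W.support_dropUntil_subset hv (support_takeUntil_subset _ h hu)⟩
  have happ : (seg.append (pb har)).IsPath := by
    rw [isPath_def, support_append]
    refine List.Nodup.append hsegP.support_nodup ?_ ?_
    · have := (pb_isPath har).support_nodup
      rw [support_eq_cons] at this
      exact this.of_cons
    · intro u hu1 hu2
      have hmem : u ∈ (pb har).support := by
        rw [support_eq_cons]; exact List.mem_cons_of_mem _ hu2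
      have hune : u ≠ a := by
        intro h; subst h
        have := (pb_isPath har).support_nodup
        rw [support_eq_cons] at this
        exact this.notMem hu2
      have hlt := (dist_le_of_mem_support hF (pb_isPath har) hmem).2 hune
      have hge := hmin u (hsegsub u hu1)
      omega
  exact ⟨seg, hsegsub, (pb_unique hF hvr _ happ).symm⟩

lemma key (hF : F.IsAcyclic) {s1 t1 s2 t2 r v a b : V}
    {W1 : F.Walk s1 t1} {W2 : F.Walk s2 t2}
    (h1 : W1.IsPath) (h2 : W2.IsPath) (hv1 : v ∈ W1.support) (hv2 : v ∈ W2.support)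
    (ha : a ∈ W1.support) (hb : b ∈ W2.support)
    (har : F.Reachable a r) (hbr : F.Reachable b r)
    (hamin : ∀ u ∈ W1.support, F.dist a r ≤ F.dist u r)
    (hbmin : ∀ u ∈ W2.support, F.dist b r ≤ F.dist u r)
    (hba : F.dist b r ≤ F.dist a r) : a ∈ W2.support := by
  have hvr : F.Reachable v r := (reachable_of_mem_support W1 hv1 ha).trans har
  obtain ⟨sa, hsa, ea⟩ := ML hF h1 ha hv1 har hamin hvr
  obtain ⟨sb, hsb, eb⟩ := ML hF h2 hb hv2 hbr hbmin hvr
  have haa : a ∈ (pb hvr).support := by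
    rw [ea]
    exact subset_support_append_right _ _ (start_mem_support _)
  rw [eb, mem_support_append_iff] at haa
  rcases haa with h | h
  · exact hsb a h
  · by_cases hab : a = b
    · exact hab ▸ hb
    · have hlt := (dist_le_of_mem_support hF (pb_isPath hbr) h).2 hab
      omega

end ForestAux

/-- For a forest `F` and a finite family of simple paths, any fractional
multicut solution `x` can be turned into an (integral) multicut `S` with
`|S| ≤ Σ_v x_v`; in particular the unweighted multicut LP on a forest has an integral
optimal solution. -/
theorem forest_multicut_integrality
    {V : Type*} [Fintype V] [DecidableEq V]
    (F : SimpleGraph V) (hF : F.IsAcyclic)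
    {ι : Type*} [Fintype ι] (e₁ e₂ : ι → V)
    (P : ∀ i : ι, F.Walk (e₁ i) (e₂ i)) (hP : ∀ i, (P i).IsPath)
    (x : V → ℝ)
    (hx0 : ∀ v, 0 ≤ x v) (hx1 : ∀ v, x v ≤ 1)
    (hcov : ∀ i, 1 ≤ ∑ v ∈ (P i).support.toFinset, x v) :
    ∃ S : Finset V,
      (∀ i, ∃ v ∈ S, v ∈ (P i).support) ∧
      (S.card : ℝ) ≤ ∑ v : V, x v := by
  classical
  set rt : V → V := fun v => Quot.out (F.connectedComponentMk v) with hrtdef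
  have rt_reach : ∀ v, F.Reachable v (rt v) := fun v =>
    (SimpleGraph.ConnectedComponent.exact (Quot.out_eq _)).symm
  have rt_congr : ∀ {u v : V}, F.Reachable u v → rt u = rt v := fun h =>
    congrArg Quot.out (SimpleGraph.ConnectedComponent.sound h)
  set dep : V → ℕ := fun v => F.dist v (rt v) with hdepdef
  have hapx : ∀ i : ι, ∃ a, a ∈ (P i).support ∧ ∀ u ∈ (P i).support, dep a ≤ dep u := by
    intro i
    obtain ⟨a, hamem, hmin⟩ := Finset.exists_min_image (P i).support.toFinset dep
      ⟨e₁ i, by simp⟩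
    exact ⟨a, by simpa using hamem, fun u hu => hmin u (by simpa using hu)⟩
  choose apx apxmem apxmin using hapx
  -- depth rewriting helper
  have hdep_eq : ∀ {s t : V} (W : F.Walk s t) (u : V), u ∈ W.support → ∀ w ∈ W.support,
      dep u = F.dist u (rt w) := by
    intro s t W u hu w hw
    show F.dist u (rt u) = F.dist u (rt w)
    rw [rt_congr (ForestAux.reachable_of_mem_support W hu hw)]
  -- key wrapper
  have keywrap : ∀ (i j : ι) (v : V), v ∈ (P i).support → v ∈ (P j).support →
      dep (apx j) ≤ dep (apx i) → apx i ∈ (P j).support := by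
    intro i j v hvi hvj hdd
    have har : F.Reachable (apx i) (rt v) :=
      (ForestAux.reachable_of_mem_support (P i) (apxmem i) hvi).trans (rt_reach v)
    have hbr : F.Reachable (apx j) (rt v) :=
      (ForestAux.reachable_of_mem_support (P j) (apxmem j) hvj).trans (rt_reach v)
    refine ForestAux.key hF (hP i) (hP j) hvi hvj (apxmem i) (apxmem j) har hbr ?_ ?_ ?_
    · intro u hu
      have h1 := apxmin i u hu
      rwa [hdep_eq (P i) (apx i) (apxmem i) v hvi, hdep_eq (P i) u hu v hvi] at h1
    · intro u hu
      have h1 := apxmin j u hu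
      rwa [hdep_eq (P j) (apx j) (apxmem j) v hvj, hdep_eq (P j) u hu v hvj] at h1
    · have h1 := hdd
      rwa [hdep_eq (P i) (apx i) (apxmem i) v hvi, hdep_eq (P j) (apx j) (apxmem j) v hvj] at h1
  -- greedy induction
  have main : ∀ (n : ℕ) (A : Finset ι), A.card ≤ n →
      ∃ (T : Finset ι) (g : ι → V), T ⊆ A ∧ (∀ t ∈ T, g t ∈ (P t).support) ∧
        (∀ i ∈ A, ∃ t ∈ T, g t ∈ (P i).support) ∧
        (∀ t ∈ T, ∀ t' ∈ T, t ≠ t' → ∀ w, w ∈ (P t).support → w ∈ (P t').support → False) := by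
    intro n
    induction n with
    | zero =>
      intro A hA
      have hAe : A = ∅ := Finset.card_eq_zero.mp (Nat.le_zero.mp hA)
      subst hAe
      exact ⟨∅, e₁, by simp, by simp, by simp, by simp⟩
    | succ n ih =>
      intro A hA
      rcases A.eq_empty_or_nonempty with rfl | hAne
      · exact ⟨∅, e₁, by simp, by simp, by simp, by simp⟩
      obtain ⟨i, hiA, hmax⟩ := A.exists_max_image (fun j => dep (apx j)) hAne
      set A' := A.filter (fun j => apx i ∉ (P j).support) with hA'def
      have hiA' : i ∉ A' := by
        simp only [hA'def, Finset.mem_filter, not_and, not_not]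
        exact fun _ => apxmem i
      have hsub : A' ⊆ A := Finset.filter_subset _ _
      have hcard : A'.card ≤ n := by
        have hlt : A'.card < A.card :=
          Finset.card_lt_card ((Finset.ssubset_iff_of_subset hsub).mpr ⟨i, hiA, hiA'⟩)
        omega
      obtain ⟨T', g', hT'sub, hg'mem, hg'cov, hdisj⟩ := ih A' hcard
      have hiT' : i ∉ T' := fun h => hiA' (hT'sub h)
      -- a path in A' has support disjoint from P i's support
      have hdisjA' : ∀ j ∈ A', ∀ w, w ∈ (P i).support → w ∈ (P j).support → False := by
        intro j hjA' w hwi hwj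
        have hjA : j ∈ A := hsub hjA'
        have : apx i ∈ (P j).support := keywrap i j w hwi hwj (hmax j hjA)
        rw [hA'def] at hjA'
        exact (Finset.mem_filter.mp hjA').2 this
      refine ⟨insert i T', Function.update g' i (apx i), ?_, ?_, ?_, ?_⟩
      · intro t ht
        rcases Finset.mem_insert.mp ht with rfl | ht
        · exact hiA
        · exact hsub (hT'sub ht)
      · intro t ht
        rcases Finset.mem_insert.mp ht with h1 | h1
        · subst h1; rw [Function.update_self]; exact apxmem t
        · rw [Function.update_of_ne (by rintro rfl; exact hiT' h1)]
          exact hg'mem t h1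
      · intro j hjA
        by_cases hcovj : apx i ∈ (P j).support
        · exact ⟨i, Finset.mem_insert_self _ _, by rw [Function.update_self]; exact hcovj⟩
        · have hjA' : j ∈ A' := by rw [hA'def]; exact Finset.mem_filter.mpr ⟨hjA, hcovj⟩
          obtain ⟨t, htT', hgt⟩ := hg'cov j hjA'
          refine ⟨t, Finset.mem_insert_of_mem htT', ?_⟩
          rwa [Function.update_of_ne (by rintro rfl; exact hiT' htT')]
      · intro t ht t' ht' hne w hwt hwt'
        rcases Finset.mem_insert.mp ht with h1 | h1 <;>
          rcases Finset.mem_insert.mp ht' with h2 | h2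
        · exact hne (h1.trans h2.symm)
        · exact hdisjA' t' (hT'sub h2) w (h1 ▸ hwt) hwt'
        · exact hdisjA' t (hT'sub h1) w (h2 ▸ hwt') hwt
        · exact hdisj t h1 t' h2 hne w hwt hwt'
  obtain ⟨T, g, _, hgmem, hgcov, hdisj⟩ := main Finset.univ.card Finset.univ le_rfl
  refine ⟨T.image g, fun i => ?_, ?_⟩
  · obtain ⟨t, htT, hgt⟩ := hgcov i (Finset.mem_univ i)
    exact ⟨g t, Finset.mem_image_of_mem g htT, hgt⟩
  · have hPD : (↑T : Set ι).PairwiseDisjoint (fun t => (P t).support.toFinset) := by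
      intro t ht t' ht' hne
      refine Finset.disjoint_left.mpr fun {w} hw hw' => ?_
      exact hdisj t ht t' ht' hne w (by simpa using hw) (by simpa using hw')
    calc ((T.image g).card : ℝ) ≤ (T.card : ℝ) := by
          exact_mod_cast Finset.card_image_le
      _ = ∑ _t ∈ T, (1 : ℝ) := by simp
      _ ≤ ∑ t ∈ T, ∑ v ∈ (P t).support.toFinset, x v :=
          Finset.sum_le_sum fun t _ => hcov t
      _ = ∑ v ∈ T.biUnion (fun t => (P t).support.toFinset), x v :=
          (Finset.sum_biUnion hPD).symm
      _ ≤ ∑ v : V, x v :=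
          Finset.sum_le_sum_of_subset_of_nonneg (Finset.subset_univ _)
            (fun v _ _ => hx0 v)
end

section
/- Fix an integer r ≥ 2 and let G be a finite simple graph. Let G' be the graph obtained from G by the following construction (with ℓ = ⌈r/2⌉ + 1): for every edge e = {u,v} of G, delete e and add a path u, a^e_1, a^e_2, …, a^e_{r−1}, v on r−1 new internal vertices; add two new paths P^b_e on vertices b^e_1, …, b^e_ℓ and P^c_e on vertices c^e_1, …, c^e_ℓ together with the edges {a^e_1, b^e_1}, {a^e_{⌊r/2⌋}, b^e_ℓ}, {a^e_{⌈r/2⌉}, c^e_1}, {a^e_{r−1}, c^e_ℓ}; finally add a cycle X on r+1 new vertices x_1, …, x_{r+1} and add the edge {x_1, v} for every original vertex v ∈ V(G). Then every cycle of G' has at least r+1 vertices. -/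
namespace FTFVSHardness

/-- Vertex type of the constructed graph `G'`: original vertices, gadget vertices
(indexed by the oriented edge `p`, a tag `0`/`1`/`2` for the `a`/`b`/`c` paths, and a
positive index), and the cycle vertices `x_1, …, x_{r+1}`. -/
abbrev W (V : Type*) := V ⊕ ((V × V) × ℕ × ℕ) ⊕ ℕ

variable {V : Type*}

/-- An original vertex of `G`. -/
def vo (u : V) : W V := Sum.inl u
/-- The vertex `a^e_i` (for `1 ≤ i ≤ r−1`) of the gadget of the oriented edge `p`. -/
def va (p : V × V) (i : ℕ) : W V := Sum.inr (Sum.inl (p, 0, i))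
/-- The vertex `b^e_j` (for `1 ≤ j ≤ ℓ`) of the gadget of the oriented edge `p`. -/
def vb (p : V × V) (j : ℕ) : W V := Sum.inr (Sum.inl (p, 1, j))
/-- The vertex `c^e_j` (for `1 ≤ j ≤ ℓ`) of the gadget of the oriented edge `p`. -/
def vc (p : V × V) (j : ℕ) : W V := Sum.inr (Sum.inl (p, 2, j))
/-- The vertex `x_k` (for `1 ≤ k ≤ r+1`) of the cycle `X`. -/
def vx (k : ℕ) : W V := Sum.inr (Sum.inr k)

/-- The edge set of the constructed graph `G'`: for each oriented edge `p = (u,v) ∈ D`,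
the path `u, a^e_1, …, a^e_{r−1}, v`, the paths `P^b_e` on `b^e_1, …, b^e_ℓ` and `P^c_e`
on `c^e_1, …, c^e_ℓ`, the connector edges `{a^e_1, b^e_1}`, `{a^e_{⌊r/2⌋}, b^e_ℓ}`,
`{a^e_{⌈r/2⌉}, c^e_1}`, `{a^e_{r−1}, c^e_ℓ}`; the cycle `X` on `x_1, …, x_{r+1}`; and the
edges `{x_1, u}` for every original vertex `u`. -/
def gadgetEdges (r ℓ : ℕ) (D : Set (V × V)) : Set (Sym2 (W V)) :=
  {e | ∃ p ∈ D,
      e = s(vo p.1, va p 1) ∨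
      (∃ i, 1 ≤ i ∧ i + 1 ≤ r - 1 ∧ e = s(va p i, va p (i + 1))) ∨
      e = s(va p (r - 1), vo p.2) ∨
      (∃ j, 1 ≤ j ∧ j + 1 ≤ ℓ ∧ e = s(vb p j, vb p (j + 1))) ∨
      (∃ j, 1 ≤ j ∧ j + 1 ≤ ℓ ∧ e = s(vc p j, vc p (j + 1))) ∨
      e = s(va p 1, vb p 1) ∨ e = s(va p (r / 2), vb p ℓ) ∨
      e = s(va p ((r + 1) / 2), vc p 1) ∨ e = s(va p (r - 1), vc p ℓ)} ∪
  {e | ∃ k, 1 ≤ k ∧ k + 1 ≤ r + 1 ∧ e = s((vx k : W V), vx (k + 1))} ∪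
  {s((vx (r + 1) : W V), vx 1)} ∪
  {e | ∃ u : V, e = s((vx 1 : W V), vo u)}

/-- The constructed graph `G'`. -/
def gadgetGraph (r ℓ : ℕ) (D : Set (V × V)) : SimpleGraph (W V) :=
  SimpleGraph.fromEdgeSet (gadgetEdges r ℓ D)

/-! ### Potential functions -/

/-- generic interpolation along the `a`-path of a non-active gadget -/
def gA (r : ℕ) (C α β : ℤ) (i : ℕ) : ℤ := min (α + (i : ℤ)) (min (β + ((r : ℤ) - (i : ℤ))) C)

def gB (r ℓ : ℕ) (C α β : ℤ) (j : ℕ) : ℤ :=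
  min (gA r C α β 1 + (j : ℤ)) (min (gA r C α β (r / 2) + ((ℓ : ℤ) + 1 - (j : ℤ))) C)

def gC' (r ℓ : ℕ) (C α β : ℤ) (j : ℕ) : ℤ :=
  min (gA r C α β ((r + 1) / 2) + (j : ℤ)) (min (gA r C α β (r - 1) + ((ℓ : ℤ) + 1 - (j : ℤ))) C)

def mkPhi [DecidableEq V] (r ℓ : ℕ) (C : ℤ) (po : Option (V × V))
    (F FB FC : ℕ → ℤ) (ov : V → ℤ) (xv : ℕ → ℤ) : W V → ℤ
  | Sum.inl w => ov w
  | Sum.inr (Sum.inl (q, t, i)) =>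
      if some q = po then (if t = 0 then F i else if t = 1 then FB i else FC i)
      else (if t = 0 then gA r C (ov q.1) (ov q.2) i
            else if t = 1 then gB r ℓ C (ov q.1) (ov q.2) i
            else gC' r ℓ C (ov q.1) (ov q.2) i)
  | Sum.inr (Sum.inr k) => xv k

section evals
variable [DecidableEq V] (r ℓ : ℕ) (C : ℤ) (po : Option (V × V))
    (F FB FC : ℕ → ℤ) (ov : V → ℤ) (xv : ℕ → ℤ)

lemma mkPhi_vo (u : V) : mkPhi r ℓ C po F FB FC ov xv (vo u) = ov u := rfl

lemma mkPhi_vx (k : ℕ) : mkPhi r ℓ C po F FB FC ov xv (vx k : W V) = xv k := rfl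

lemma mkPhi_va (q : V × V) (i : ℕ) : mkPhi r ℓ C po F FB FC ov xv (va q i) =
    if some q = po then F i else gA r C (ov q.1) (ov q.2) i := by
  simp [mkPhi, va]

lemma mkPhi_vb (q : V × V) (j : ℕ) : mkPhi r ℓ C po F FB FC ov xv (vb q j) =
    if some q = po then FB j else gB r ℓ C (ov q.1) (ov q.2) j := by
  simp [mkPhi, vb]

lemma mkPhi_vc (q : V × V) (j : ℕ) : mkPhi r ℓ C po F FB FC ov xv (vc q j) =
    if some q = po then FC j else gC' r ℓ C (ov q.1) (ov q.2) j := by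
  simp [mkPhi, vc]

end evals

lemma mkPhi_lip [DecidableEq V] (r ℓ : ℕ) (hr : 2 ≤ r) (hl : ℓ = (r + 1) / 2 + 1)
    (D : Set (V × V)) (e₀ : Sym2 (W V)) (C : ℤ) (po : Option (V × V))
    (F FB FC : ℕ → ℤ) (ov : V → ℤ) (xv : ℕ → ℤ)
    (hov1 : ∀ w, ov w ≤ C)
    (hov2 : ∀ w w', ov w ≤ ov w' + (r : ℤ))
    (h1 : ∀ p : V × V, some p = po → p ∈ D → s(vo p.1, va p 1) ≠ e₀ →
      ov p.1 ≤ F 1 + 1 ∧ F 1 ≤ ov p.1 + 1)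
    (h2 : ∀ p : V × V, some p = po → p ∈ D → ∀ i, 1 ≤ i → i + 1 ≤ r - 1 →
      s(va p i, va p (i + 1)) ≠ e₀ → F i ≤ F (i + 1) + 1 ∧ F (i + 1) ≤ F i + 1)
    (h3 : ∀ p : V × V, some p = po → p ∈ D → s(va p (r - 1), vo p.2) ≠ e₀ →
      F (r - 1) ≤ ov p.2 + 1 ∧ ov p.2 ≤ F (r - 1) + 1)
    (h4 : ∀ p : V × V, some p = po → p ∈ D → ∀ j, 1 ≤ j → j + 1 ≤ ℓ →
      s(vb p j, vb p (j + 1)) ≠ e₀ → FB j ≤ FB (j + 1) + 1 ∧ FB (j + 1) ≤ FB j + 1)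
    (h5 : ∀ p : V × V, some p = po → p ∈ D → ∀ j, 1 ≤ j → j + 1 ≤ ℓ →
      s(vc p j, vc p (j + 1)) ≠ e₀ → FC j ≤ FC (j + 1) + 1 ∧ FC (j + 1) ≤ FC j + 1)
    (h6 : ∀ p : V × V, some p = po → p ∈ D → s(va p 1, vb p 1) ≠ e₀ →
      F 1 ≤ FB 1 + 1 ∧ FB 1 ≤ F 1 + 1)
    (h7 : ∀ p : V × V, some p = po → p ∈ D → s(va p (r / 2), vb p ℓ) ≠ e₀ →
      F (r / 2) ≤ FB ℓ + 1 ∧ FB ℓ ≤ F (r / 2) + 1)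
    (h8 : ∀ p : V × V, some p = po → p ∈ D → s(va p ((r + 1) / 2), vc p 1) ≠ e₀ →
      F ((r + 1) / 2) ≤ FC 1 + 1 ∧ FC 1 ≤ F ((r + 1) / 2) + 1)
    (h9 : ∀ p : V × V, some p = po → p ∈ D → s(va p (r - 1), vc p ℓ) ≠ e₀ →
      F (r - 1) ≤ FC ℓ + 1 ∧ FC ℓ ≤ F (r - 1) + 1)
    (hx1 : ∀ k, 1 ≤ k → k + 1 ≤ r + 1 → s((vx k : W V), vx (k + 1)) ≠ e₀ →
      xv k ≤ xv (k + 1) + 1 ∧ xv (k + 1) ≤ xv k + 1)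
    (hx2 : s((vx (r + 1) : W V), vx 1) ≠ e₀ →
      xv (r + 1) ≤ xv 1 + 1 ∧ xv 1 ≤ xv (r + 1) + 1)
    (hx3 : ∀ u : V, s((vx 1 : W V), vo u) ≠ e₀ → xv 1 ≤ ov u + 1 ∧ ov u ≤ xv 1 + 1) :
    ∀ y z, (gadgetGraph r ℓ D).Adj y z → s(y, z) ≠ e₀ →
      mkPhi r ℓ C po F FB FC ov xv y ≤ mkPhi r ℓ C po F FB FC ov xv z + 1 ∧
      mkPhi r ℓ C po F FB FC ov xv z ≤ mkPhi r ℓ C po F FB FC ov xv y + 1 := by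
  intro y z hadj hne
  rw [gadgetGraph, SimpleGraph.fromEdgeSet_adj] at hadj
  obtain ⟨hm, -⟩ := hadj
  simp only [gadgetEdges, Set.mem_union, Set.mem_setOf_eq, Set.mem_singleton_iff] at hm
  set Φ := mkPhi r ℓ C po F FB FC ov xv with hΦ
  have hfg : r / 2 ≤ (r + 1) / 2 := by omega
  rcases hm with ((⟨p, hp, hca⟩ | ⟨k, hk1, hk2, hE⟩) | hE) | ⟨u, hE⟩
  · rcases hca with hE | ⟨i, hi1, hi2, hE⟩ | hE | ⟨j, hj1, hj2, hE⟩ | ⟨j, hj1, hj2, hE⟩ |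
      hE | hE | hE | hE
    · -- T1
      have key : s(vo p.1, va p 1) ≠ e₀ → Φ (vo p.1) ≤ Φ (va p 1) + 1 ∧ Φ (va p 1) ≤ Φ (vo p.1) + 1 := by
        intro hAB
        simp only [hΦ, mkPhi_vo, mkPhi_va]
        split_ifs with hq
        · exact h1 p hq hp hAB
        · have o1 := hov1 p.1; have o2 := hov1 p.2
          have o3 := hov2 p.1 p.2; have o4 := hov2 p.2 p.1
          unfold gA; omega
      rcases Sym2.eq_iff.mp hE with ⟨rfl, rfl⟩ | ⟨rfl, rfl⟩
      · exact key hne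
      · have h := key (by rwa [Sym2.eq_swap] at hne); exact ⟨h.2, h.1⟩
    · -- T2
      have key : s(va p i, va p (i + 1)) ≠ e₀ → Φ (va p i) ≤ Φ (va p (i + 1)) + 1 ∧ Φ (va p (i + 1)) ≤ Φ (va p i) + 1 := by
        intro hAB
        simp only [hΦ, mkPhi_va]
        split_ifs with hq
        · exact h2 p hq hp i hi1 hi2 hAB
        · unfold gA; omega
      rcases Sym2.eq_iff.mp hE with ⟨rfl, rfl⟩ | ⟨rfl, rfl⟩
      · exact key hne
      · have h := key (by rwa [Sym2.eq_swap] at hne); exact ⟨h.2, h.1⟩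
    · -- T3
      have key : s(va p (r - 1), vo p.2) ≠ e₀ → Φ (va p (r - 1)) ≤ Φ (vo p.2) + 1 ∧ Φ (vo p.2) ≤ Φ (va p (r - 1)) + 1 := by
        intro hAB
        simp only [hΦ, mkPhi_vo, mkPhi_va]
        split_ifs with hq
        · exact h3 p hq hp hAB
        · have o1 := hov1 p.1; have o2 := hov1 p.2
          have o3 := hov2 p.1 p.2; have o4 := hov2 p.2 p.1
          unfold gA; omega
      rcases Sym2.eq_iff.mp hE with ⟨rfl, rfl⟩ | ⟨rfl, rfl⟩
      · exact key hne
      · have h := key (by rwa [Sym2.eq_swap] at hne); exact ⟨h.2, h.1⟩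
    · -- T4
      have key : s(vb p j, vb p (j + 1)) ≠ e₀ → Φ (vb p j) ≤ Φ (vb p (j + 1)) + 1 ∧ Φ (vb p (j + 1)) ≤ Φ (vb p j) + 1 := by
        intro hAB
        simp only [hΦ, mkPhi_vb]
        split_ifs with hq
        · exact h4 p hq hp j hj1 hj2 hAB
        · unfold gB gA; omega
      rcases Sym2.eq_iff.mp hE with ⟨rfl, rfl⟩ | ⟨rfl, rfl⟩
      · exact key hne
      · have h := key (by rwa [Sym2.eq_swap] at hne); exact ⟨h.2, h.1⟩
    · -- T5
      have key : s(vc p j, vc p (j + 1)) ≠ e₀ → Φ (vc p j) ≤ Φ (vc p (j + 1)) + 1 ∧ Φ (vc p (j + 1)) ≤ Φ (vc p j) + 1 := by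
        intro hAB
        simp only [hΦ, mkPhi_vc]
        split_ifs with hq
        · exact h5 p hq hp j hj1 hj2 hAB
        · unfold gC' gA; omega
      rcases Sym2.eq_iff.mp hE with ⟨rfl, rfl⟩ | ⟨rfl, rfl⟩
      · exact key hne
      · have h := key (by rwa [Sym2.eq_swap] at hne); exact ⟨h.2, h.1⟩
    · -- T6
      have key : s(va p 1, vb p 1) ≠ e₀ → Φ (va p 1) ≤ Φ (vb p 1) + 1 ∧ Φ (vb p 1) ≤ Φ (va p 1) + 1 := by
        intro hAB
        simp only [hΦ, mkPhi_va, mkPhi_vb]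
        split_ifs with hq
        · exact h6 p hq hp hAB
        · unfold gB gA; omega
      rcases Sym2.eq_iff.mp hE with ⟨rfl, rfl⟩ | ⟨rfl, rfl⟩
      · exact key hne
      · have h := key (by rwa [Sym2.eq_swap] at hne); exact ⟨h.2, h.1⟩
    · -- T7
      have key : s(va p (r / 2), vb p ℓ) ≠ e₀ → Φ (va p (r / 2)) ≤ Φ (vb p ℓ) + 1 ∧ Φ (vb p ℓ) ≤ Φ (va p (r / 2)) + 1 := by
        intro hAB
        simp only [hΦ, mkPhi_va, mkPhi_vb]
        split_ifs with hq
        · exact h7 p hq hp hAB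
        · unfold gB gA; omega
      rcases Sym2.eq_iff.mp hE with ⟨rfl, rfl⟩ | ⟨rfl, rfl⟩
      · exact key hne
      · have h := key (by rwa [Sym2.eq_swap] at hne); exact ⟨h.2, h.1⟩
    · -- T8
      have key : s(va p ((r + 1) / 2), vc p 1) ≠ e₀ → Φ (va p ((r + 1) / 2)) ≤ Φ (vc p 1) + 1 ∧ Φ (vc p 1) ≤ Φ (va p ((r + 1) / 2)) + 1 := by
        intro hAB
        simp only [hΦ, mkPhi_va, mkPhi_vc]
        split_ifs with hq
        · exact h8 p hq hp hAB
        · unfold gC' gA; omega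
      rcases Sym2.eq_iff.mp hE with ⟨rfl, rfl⟩ | ⟨rfl, rfl⟩
      · exact key hne
      · have h := key (by rwa [Sym2.eq_swap] at hne); exact ⟨h.2, h.1⟩
    · -- T9
      have key : s(va p (r - 1), vc p ℓ) ≠ e₀ → Φ (va p (r - 1)) ≤ Φ (vc p ℓ) + 1 ∧ Φ (vc p ℓ) ≤ Φ (va p (r - 1)) + 1 := by
        intro hAB
        simp only [hΦ, mkPhi_va, mkPhi_vc]
        split_ifs with hq
        · exact h9 p hq hp hAB
        · unfold gC' gA; omega
      rcases Sym2.eq_iff.mp hE with ⟨rfl, rfl⟩ | ⟨rfl, rfl⟩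
      · exact key hne
      · have h := key (by rwa [Sym2.eq_swap] at hne); exact ⟨h.2, h.1⟩
  · -- T10
    have key : s((vx k : W V), vx (k + 1)) ≠ e₀ → Φ (vx k : W V) ≤ Φ (vx (k + 1) : W V) + 1 ∧ Φ (vx (k + 1) : W V) ≤ Φ (vx k : W V) + 1 := by
      intro hAB
      simp only [hΦ, mkPhi_vx]
      exact hx1 k hk1 hk2 hAB
    rcases Sym2.eq_iff.mp hE with ⟨rfl, rfl⟩ | ⟨rfl, rfl⟩
    · exact key hne
    · have h := key (by rwa [Sym2.eq_swap] at hne); exact ⟨h.2, h.1⟩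
  · -- T11
    have key : s((vx (r + 1) : W V), vx 1) ≠ e₀ → Φ (vx (r + 1) : W V) ≤ Φ (vx 1 : W V) + 1 ∧ Φ (vx 1 : W V) ≤ Φ (vx (r + 1) : W V) + 1 := by
      intro hAB
      simp only [hΦ, mkPhi_vx]
      exact hx2 hAB
    rcases Sym2.eq_iff.mp hE with ⟨rfl, rfl⟩ | ⟨rfl, rfl⟩
    · exact key hne
    · have h := key (by rwa [Sym2.eq_swap] at hne); exact ⟨h.2, h.1⟩
  · -- T12
    have key : s((vx 1 : W V), vo u) ≠ e₀ → Φ (vx 1 : W V) ≤ Φ (vo u) + 1 ∧ Φ (vo u) ≤ Φ (vx 1 : W V) + 1 := by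
      intro hAB
      simp only [hΦ, mkPhi_vx, mkPhi_vo]
      exact hx3 u hAB
    rcases Sym2.eq_iff.mp hE with ⟨rfl, rfl⟩ | ⟨rfl, rfl⟩
    · exact key hne
    · have h := key (by rwa [Sym2.eq_swap] at hne); exact ⟨h.2, h.1⟩

/-! ### From Lipschitz potentials to cycle length bounds -/

lemma reach {G' : SimpleGraph (W V)} (Φ : W V → ℤ) (e₀ : Sym2 (W V))
    (hlip : ∀ y z, G'.Adj y z → s(y, z) ≠ e₀ → Φ y ≤ Φ z + 1 ∧ Φ z ≤ Φ y + 1) :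
    ∀ {x y : W V} (q : G'.Walk x y), e₀ ∉ q.edges →
      Φ x ≤ Φ y + q.length ∧ Φ y ≤ Φ x + q.length := by
  intro x y q
  induction q with
  | nil => simp
  | @cons a b c h p ih =>
    intro he
    rw [SimpleGraph.Walk.edges_cons, List.mem_cons] at he
    push_neg at he
    obtain ⟨he1, he2⟩ := he
    have h1 := hlip a b h (fun hh => he1 hh.symm)
    have h2 := ih he2
    rw [SimpleGraph.Walk.length_cons]
    push_cast
    omega

lemma finish {r ℓ : ℕ} {D : Set (V × V)} {w v₀ : W V}
    (q : (gadgetGraph r ℓ D).Walk v₀ w) (Φ : W V → ℤ) (A B : W V)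
    (hE : s(w, v₀) = s(A, B)) (hne : s(w, v₀) ∉ q.edges)
    (hlip : ∀ y z, (gadgetGraph r ℓ D).Adj y z → s(y, z) ≠ s(A, B) →
      Φ y ≤ Φ z + 1 ∧ Φ z ≤ Φ y + 1)
    (hgap : Φ A + (r : ℤ) ≤ Φ B ∨ Φ B + (r : ℤ) ≤ Φ A) : r ≤ q.length := by
  rw [hE] at hne
  have hb := reach Φ s(A, B) hlip q hne
  rcases Sym2.eq_iff.mp hE with ⟨h1, h2⟩ | ⟨h1, h2⟩ <;> subst h1 <;> subst h2 <;>
    · obtain ⟨b1, b2⟩ := hb; omega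

lemma gadget_case [DecidableEq V] {r ℓ : ℕ} (hr : 2 ≤ r) (hl : ℓ = (r + 1) / 2 + 1)
    {D : Set (V × V)} {p : V × V} (hp : p ∈ D) (hvu : p.2 ≠ p.1)
    {w v₀ : W V} (q : (gadgetGraph r ℓ D).Walk v₀ w) (hne : s(w, v₀) ∉ q.edges)
    (A B : W V) (hE : s(w, v₀) = s(A, B))
    (F FB FC : ℕ → ℤ) (U Vv : ℤ)
    (hUV : U ≤ Vv + 2 ∧ Vv ≤ U + 2)
    (h1 : s(vo p.1, va p 1) ≠ s(A, B) → U ≤ F 1 + 1 ∧ F 1 ≤ U + 1)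
    (h2 : ∀ i, 1 ≤ i → i + 1 ≤ r - 1 → s(va p i, va p (i + 1)) ≠ s(A, B) →
      F i ≤ F (i + 1) + 1 ∧ F (i + 1) ≤ F i + 1)
    (h3 : s(va p (r - 1), vo p.2) ≠ s(A, B) → F (r - 1) ≤ Vv + 1 ∧ Vv ≤ F (r - 1) + 1)
    (h4 : ∀ j, 1 ≤ j → j + 1 ≤ ℓ → s(vb p j, vb p (j + 1)) ≠ s(A, B) →
      FB j ≤ FB (j + 1) + 1 ∧ FB (j + 1) ≤ FB j + 1)
    (h5 : ∀ j, 1 ≤ j → j + 1 ≤ ℓ → s(vc p j, vc p (j + 1)) ≠ s(A, B) →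
      FC j ≤ FC (j + 1) + 1 ∧ FC (j + 1) ≤ FC j + 1)
    (h6 : s(va p 1, vb p 1) ≠ s(A, B) → F 1 ≤ FB 1 + 1 ∧ FB 1 ≤ F 1 + 1)
    (h7 : s(va p (r / 2), vb p ℓ) ≠ s(A, B) → F (r / 2) ≤ FB ℓ + 1 ∧ FB ℓ ≤ F (r / 2) + 1)
    (h8 : s(va p ((r + 1) / 2), vc p 1) ≠ s(A, B) →
      F ((r + 1) / 2) ≤ FC 1 + 1 ∧ FC 1 ≤ F ((r + 1) / 2) + 1)
    (h9 : s(va p (r - 1), vc p ℓ) ≠ s(A, B) → F (r - 1) ≤ FC ℓ + 1 ∧ FC ℓ ≤ F (r - 1) + 1)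
    (hgap : ∀ Φ : W V → ℤ, Φ = mkPhi r ℓ (min U Vv + 2) (some p) F FB FC
        (fun x => if x = p.1 then U else if x = p.2 then Vv else min U Vv + 2)
        (fun k => if k = 1 then min U Vv + 1 else min U Vv + 2) →
        Φ A + (r : ℤ) ≤ Φ B ∨ Φ B + (r : ℤ) ≤ Φ A) :
    r ≤ q.length := by
  have hr' : (2 : ℤ) ≤ (r : ℤ) := by exact_mod_cast hr
  apply finish q _ A B hE hne ?_ (hgap _ rfl)
  apply mkPhi_lip r ℓ hr hl D s(A, B) (min U Vv + 2) (some p) F FB FC _ _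
  · intro x; dsimp -failIfUnchanged only; split_ifs <;> omega
  · intro x x'; dsimp -failIfUnchanged only; split_ifs <;> omega
  · intro p' hp' hpD hne'
    injection hp' with h; subst h
    have := h1 hne'; simp only [if_pos rfl]; exact this
  · intro p' hp' hpD i hi1 hi2 hne'
    injection hp' with h; subst h
    exact h2 i hi1 hi2 hne'
  · intro p' hp' hpD hne'
    injection hp' with h; subst h
    have := h3 hne'
    simp only [if_neg hvu, if_pos rfl]
    exact this
  · intro p' hp' hpD j hj1 hj2 hne'
    injection hp' with h; subst h
    exact h4 j hj1 hj2 hne'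
  · intro p' hp' hpD j hj1 hj2 hne'
    injection hp' with h; subst h
    exact h5 j hj1 hj2 hne'
  · intro p' hp' hpD hne'
    injection hp' with h; subst h
    exact h6 hne'
  · intro p' hp' hpD hne'
    injection hp' with h; subst h
    exact h7 hne'
  · intro p' hp' hpD hne'
    injection hp' with h; subst h
    exact h8 hne'
  · intro p' hp' hpD hne'
    injection hp' with h; subst h
    exact h9 hne'
  · intro k hk1 hk2 hne'; dsimp -failIfUnchanged only; split_ifs <;> omega
  · intro hne'; dsimp -failIfUnchanged only; split_ifs <;> omega
  · intro u hne'; dsimp -failIfUnchanged only; split_ifs <;> omega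

lemma x_case [DecidableEq V] {r ℓ : ℕ} (hr : 2 ≤ r) (hl : ℓ = (r + 1) / 2 + 1)
    {D : Set (V × V)}
    {w v₀ : W V} (q : (gadgetGraph r ℓ D).Walk v₀ w) (hne : s(w, v₀) ∉ q.edges)
    (A B : W V) (hE : s(w, v₀) = s(A, B))
    (ov : V → ℤ) (xv : ℕ → ℤ) (C : ℤ)
    (hov1 : ∀ x, ov x ≤ C) (hov2 : ∀ x x', ov x ≤ ov x' + (r : ℤ))
    (hx1 : ∀ k, 1 ≤ k → k + 1 ≤ r + 1 → s((vx k : W V), vx (k + 1)) ≠ s(A, B) →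
      xv k ≤ xv (k + 1) + 1 ∧ xv (k + 1) ≤ xv k + 1)
    (hx2 : s((vx (r + 1) : W V), vx 1) ≠ s(A, B) →
      xv (r + 1) ≤ xv 1 + 1 ∧ xv 1 ≤ xv (r + 1) + 1)
    (hx3 : ∀ u : V, s((vx 1 : W V), vo u) ≠ s(A, B) → xv 1 ≤ ov u + 1 ∧ ov u ≤ xv 1 + 1)
    (hgap : ∀ Φ : W V → ℤ, Φ = mkPhi r ℓ C none (fun _ => 0) (fun _ => 0) (fun _ => 0) ov xv →
        Φ A + (r : ℤ) ≤ Φ B ∨ Φ B + (r : ℤ) ≤ Φ A) :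
    r ≤ q.length := by
  apply finish q _ A B hE hne ?_ (hgap _ rfl)
  apply mkPhi_lip r ℓ hr hl D s(A, B) C none _ _ _ ov xv hov1 hov2
    (fun p hpo => absurd hpo (Option.some_ne_none p))
    (fun p hpo => absurd hpo (Option.some_ne_none p))
    (fun p hpo => absurd hpo (Option.some_ne_none p))
    (fun p hpo => absurd hpo (Option.some_ne_none p))
    (fun p hpo => absurd hpo (Option.some_ne_none p))
    (fun p hpo => absurd hpo (Option.some_ne_none p))
    (fun p hpo => absurd hpo (Option.some_ne_none p))
    (fun p hpo => absurd hpo (Option.some_ne_none p))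
    (fun p hpo => absurd hpo (Option.some_ne_none p))
    hx1 hx2 hx3


set_option maxHeartbeats 4000000 in
/-- For `r ≥ 2`, `ℓ = ⌈r/2⌉ + 1` and `D` an orientation of the edges of a
finite simple graph `G`, every cycle of the constructed graph `G'` has at least `r + 1`
vertices. -/
theorem every_cycle_of_gadgetGraph_long
    {V : Type*} [Fintype V] [DecidableEq V]
    (r : ℕ) (hr : 2 ≤ r) (G : SimpleGraph V)
    (ℓ : ℕ) (hℓ : ℓ = (r + 1) / 2 + 1)
    (D : Set (V × V))
    (hD1 : ∀ p ∈ D, G.Adj p.1 p.2)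
    (hD2 : ∀ u v : V, G.Adj u v → (u, v) ∈ D ∨ (v, u) ∈ D)
    (hD3 : ∀ u v : V, (u, v) ∈ D → (v, u) ∉ D) :
    ∀ ⦃w : W V⦄ (c : (gadgetGraph r ℓ D).Walk w w), c.IsCycle →
      r + 1 ≤ c.support.toFinset.card := by
  intro w c hc
  cases c with
  | nil => exact absurd rfl hc.ne_nil
  | @cons _ v₀ _ hadj q =>
    obtain ⟨hq, hne⟩ := (SimpleGraph.Walk.cons_isCycle_iff q hadj).mp hc
    rw [SimpleGraph.Walk.support_cons, List.toFinset_cons,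
      Finset.insert_eq_self.mpr (List.mem_toFinset.mpr q.end_mem_support),
      List.toFinset_card_of_nodup hq.support_nodup, SimpleGraph.Walk.length_support]
    suffices hlen : r ≤ q.length by omega
    have hadj' := hadj
    rw [gadgetGraph, SimpleGraph.fromEdgeSet_adj] at hadj'
    obtain ⟨hm, -⟩ := hadj'
    simp only [gadgetEdges, Set.mem_union, Set.mem_setOf_eq, Set.mem_singleton_iff] at hm
    rcases hm with ((⟨p, hp, hca⟩ | ⟨k, hk1, hk2, hE⟩) | hE) | ⟨u, hE⟩
    · have hvu : p.2 ≠ p.1 := (hD1 p hp).ne'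
      rcases hca with hE | ⟨i, hi1, hi2, hE⟩ | hE | ⟨j, hj1, hj2, hE⟩ | ⟨j, hj1, hj2, hE⟩ |
        hE | hE | hE | hE
      · -- C1 : e₀ = s(vo u, va p 1)
        exact gadget_case hr hℓ hp hvu q hne _ _ hE
          (fun x => (x : ℤ) - 1)
          (fun j => min (j : ℤ) (((r / 2 : ℕ) : ℤ) + (ℓ : ℤ) - j))
          (fun j => min ((((r + 1) / 2 : ℕ) : ℤ) - 1 + (j : ℤ)) ((r : ℤ) - 1 + (ℓ : ℤ) - j))
          ((r : ℤ) + 1) ((r : ℤ) - 1)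
          (by omega)
          (fun hne' => absurd rfl hne')
          (by intro i hi1 hi2 _; dsimp -failIfUnchanged only; omega)
          (by intro _; dsimp -failIfUnchanged only; omega)
          (by intro j hj1 hj2 _; dsimp -failIfUnchanged only; omega)
          (by intro j hj1 hj2 _; dsimp -failIfUnchanged only; omega)
          (by intro _; dsimp -failIfUnchanged only; omega)
          (by intro _; dsimp -failIfUnchanged only; omega)
          (by intro _; dsimp -failIfUnchanged only; omega)
          (by intro _; dsimp -failIfUnchanged only; omega)
          (by intro Φ hΦ; subst hΦ
              simp [mkPhi_vo, mkPhi_va, hvu]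
              try first | omega | (split_ifs <;> omega))
      · -- C2 : e₀ = s(va p i, va p (i+1))
        by_cases hc1 : i + 1 ≤ r / 2
        · -- C2a
          exact gadget_case hr hℓ hp hvu q hne _ _ hE
            (fun x => if x ≤ i then (r : ℤ) + (x : ℤ) - i else (x : ℤ) - i - 1)
            (fun j => min ((r : ℤ) + 1 - i + j) (((r / 2 : ℕ) : ℤ) - (i : ℤ) + (ℓ : ℤ) - j))
            (fun j => min ((((r + 1) / 2 : ℕ) : ℤ) - (i : ℤ) - 1 + (j : ℤ))
              ((r : ℤ) - 1 - i + (ℓ : ℤ) - j))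
            ((r : ℤ) + 1 - i) ((r : ℤ) - 1 - i)
            (by omega)
            (by intro _; dsimp -failIfUnchanged only; split_ifs <;> omega)
            (by intro i' hi1' hi2' hne'
                by_cases hii : i' = i
                · subst hii; exact absurd rfl hne'
                · dsimp -failIfUnchanged only; split_ifs <;> omega)
            (by intro _; dsimp -failIfUnchanged only; split_ifs <;> omega)
            (by intro j hj1 hj2 _; dsimp -failIfUnchanged only; omega)
            (by intro j hj1 hj2 _; dsimp -failIfUnchanged only; omega)
            (by intro _; dsimp -failIfUnchanged only; split_ifs <;> omega)
            (by intro _; dsimp -failIfUnchanged only; split_ifs <;> omega)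
            (by intro _; dsimp -failIfUnchanged only; split_ifs <;> omega)
            (by intro _; dsimp -failIfUnchanged only; split_ifs <;> omega)
            (by intro Φ hΦ; subst hΦ
                simp [mkPhi_va, hvu]
                try first | omega | (split_ifs <;> omega))
        · by_cases hc2 : (r + 1) / 2 ≤ i
          · -- C2b
            exact gadget_case hr hℓ hp hvu q hne _ _ hE
              (fun x => if x ≤ i then (i : ℤ) - x else (r : ℤ) + 1 + i - x)
              (fun j => min ((i : ℤ) - 1 + j) ((i : ℤ) - ((r / 2 : ℕ) : ℤ) + 1 + (ℓ : ℤ) - j))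
              (fun j => min ((i : ℤ) - (((r + 1) / 2 : ℕ) : ℤ) + (j : ℤ)) ((i : ℤ) + 3 + (ℓ : ℤ) - j))
              ((i : ℤ)) ((i : ℤ) + 2)
              (by omega)
              (by intro _; dsimp -failIfUnchanged only; split_ifs <;> omega)
              (by intro i' hi1' hi2' hne'
                  by_cases hii : i' = i
                  · subst hii; exact absurd rfl hne'
                  · dsimp -failIfUnchanged only; split_ifs <;> omega)
              (by intro _; dsimp -failIfUnchanged only; split_ifs <;> omega)
              (by intro j hj1 hj2 _; dsimp -failIfUnchanged only; omega)
              (by intro j hj1 hj2 _; dsimp -failIfUnchanged only; omega)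
              (by intro _; dsimp -failIfUnchanged only; split_ifs <;> omega)
              (by intro _; dsimp -failIfUnchanged only; split_ifs <;> omega)
              (by intro _; dsimp -failIfUnchanged only; split_ifs <;> omega)
              (by intro _; dsimp -failIfUnchanged only; split_ifs <;> omega)
              (by intro Φ hΦ; subst hΦ
                  simp [mkPhi_va, hvu]
                  try first | omega | (split_ifs <;> omega))
          · -- C2c : i = r/2, i+1 = (r+1)/2 (r odd)
            exact gadget_case hr hℓ hp hvu q hne _ _ hE
              (fun x => if x ≤ r / 2 then ((r / 2 : ℕ) : ℤ) + 2 + (x : ℤ)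
                else (x : ℤ) - (((r + 1) / 2 : ℕ) : ℤ))
              (fun j => min (((r / 2 : ℕ) : ℤ) + 3 + (j : ℤ)) ((r : ℤ) + 2 + (ℓ : ℤ) - j))
              (fun j => min ((j : ℤ)) (((r / 2 : ℕ) : ℤ) + (ℓ : ℤ) - j))
              (((r / 2 : ℕ) : ℤ) + 2) (((r / 2 : ℕ) : ℤ))
              (by omega)
              (by intro _; dsimp -failIfUnchanged only; split_ifs <;> omega)
              (by intro i' hi1' hi2' hne'
                  by_cases hii : i' = i
                  · subst hii; exact absurd rfl hne'
                  · dsimp -failIfUnchanged only; split_ifs <;> omega)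
              (by intro _; dsimp -failIfUnchanged only; split_ifs <;> omega)
              (by intro j hj1 hj2 _; dsimp -failIfUnchanged only; omega)
              (by intro j hj1 hj2 _; dsimp -failIfUnchanged only; omega)
              (by intro _; dsimp -failIfUnchanged only; split_ifs <;> omega)
              (by intro _; dsimp -failIfUnchanged only; split_ifs <;> omega)
              (by intro _; dsimp -failIfUnchanged only; split_ifs <;> omega)
              (by intro _; dsimp -failIfUnchanged only; split_ifs <;> omega)
              (by intro Φ hΦ; subst hΦ
                  simp [mkPhi_va, hvu]
                  try first | omega | (split_ifs <;> omega))
      · -- C3 : e₀ = s(va p (r-1), vo v)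
        exact gadget_case hr hℓ hp hvu q hne _ _ hE
          (fun x => (r : ℤ) - 1 - x)
          (fun j => min ((r : ℤ) - 2 + j) ((((r + 1) / 2 : ℕ) : ℤ) + (ℓ : ℤ) - j))
          (fun j => min (((r / 2 : ℕ) : ℤ) - 1 + (j : ℤ)) ((ℓ : ℤ) + 1 - j))
          ((r : ℤ) - 1) ((r : ℤ) + 1)
          (by omega)
          (by intro _; dsimp -failIfUnchanged only; omega)
          (by intro i hi1 hi2 _; dsimp -failIfUnchanged only; omega)
          (fun hne' => absurd rfl hne')
          (by intro j hj1 hj2 _; dsimp -failIfUnchanged only; omega)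
          (by intro j hj1 hj2 _; dsimp -failIfUnchanged only; omega)
          (by intro _; dsimp -failIfUnchanged only; omega)
          (by intro _; dsimp -failIfUnchanged only; omega)
          (by intro _; dsimp -failIfUnchanged only; omega)
          (by intro _; dsimp -failIfUnchanged only; omega)
          (by intro Φ hΦ; subst hΦ
              simp [mkPhi_vo, mkPhi_va, hvu]
              try first | omega | (split_ifs <;> omega))
      · -- C4 : e₀ = s(vb p j, vb p (j+1))
        exact gadget_case hr hℓ hp hvu q hne _ _ hE
          (fun x => if x ≤ r / 2 then (ℓ : ℤ) - j + ((r / 2 : ℕ) : ℤ) - x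
            else (ℓ : ℤ) - j + (x : ℤ) - ((r / 2 : ℕ) : ℤ))
          (fun j' => if j + 1 ≤ j' then (j' : ℤ) - j - 1
            else (ℓ : ℤ) - j + ((r / 2 : ℕ) : ℤ) + (j' : ℤ) - 1)
          (fun j' => min ((ℓ : ℤ) - j + (((r + 1) / 2 : ℕ) : ℤ) - ((r / 2 : ℕ) : ℤ) + (j' : ℤ))
            ((ℓ : ℤ) - j + (((r + 1) / 2 : ℕ) : ℤ) + (ℓ : ℤ) - j'))
          ((ℓ : ℤ) - j + ((r / 2 : ℕ) : ℤ)) ((ℓ : ℤ) - j + (((r + 1) / 2 : ℕ) : ℤ))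
          (by omega)
          (by intro _; dsimp -failIfUnchanged only; split_ifs <;> omega)
          (by intro i hi1 hi2 _; dsimp -failIfUnchanged only; split_ifs <;> omega)
          (by intro _; dsimp -failIfUnchanged only; split_ifs <;> omega)
          (by intro j' hj1' hj2' hne'
              by_cases hjj : j' = j
              · subst hjj; exact absurd rfl hne'
              · dsimp -failIfUnchanged only; split_ifs <;> omega)
          (by intro j' hj1' hj2' _; dsimp -failIfUnchanged only; omega)
          (by intro _; dsimp -failIfUnchanged only; split_ifs <;> omega)
          (by intro _; dsimp -failIfUnchanged only; split_ifs <;> omega)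
          (by intro _; dsimp -failIfUnchanged only; split_ifs <;> omega)
          (by intro _; dsimp -failIfUnchanged only; split_ifs <;> omega)
          (by intro Φ hΦ; subst hΦ
              simp [mkPhi_vb, hvu]
              try first | omega | (split_ifs <;> omega))
      · -- C5 : e₀ = s(vc p j, vc p (j+1))
        exact gadget_case hr hℓ hp hvu q hne _ _ hE
          (fun x => min ((ℓ : ℤ) - j + (r : ℤ) - 1 - x)
            ((ℓ : ℤ) - j + min ((r : ℤ) - 1) 3 + (x : ℤ)))
          (fun j' => min (min ((ℓ : ℤ) - j + (r : ℤ) - 2) ((ℓ : ℤ) - j + min ((r : ℤ) - 1) 3 + 1) + (j' : ℤ))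
            (min ((ℓ : ℤ) - j + (((r + 1) / 2 : ℕ) : ℤ) - 1) ((ℓ : ℤ) - j + min ((r : ℤ) - 1) 3 + ((r / 2 : ℕ) : ℤ)) + 1 + (ℓ : ℤ) - j'))
          (fun j' => if j + 1 ≤ j' then (j' : ℤ) - j - 1
            else (ℓ : ℤ) - j + ((r / 2 : ℕ) : ℤ) - 1 + (j' : ℤ))
          ((ℓ : ℤ) - j + min ((r : ℤ) - 1) 3) ((ℓ : ℤ) - j + 1)
          (by omega)
          (by intro _; dsimp -failIfUnchanged only; omega)
          (by intro i hi1 hi2 _; dsimp -failIfUnchanged only; omega)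
          (by intro _; dsimp -failIfUnchanged only; omega)
          (by intro j' hj1' hj2' _; dsimp -failIfUnchanged only; omega)
          (by intro j' hj1' hj2' hne'
              by_cases hjj : j' = j
              · subst hjj; exact absurd rfl hne'
              · dsimp -failIfUnchanged only; split_ifs <;> omega)
          (by intro _; dsimp -failIfUnchanged only; omega)
          (by intro _; dsimp -failIfUnchanged only; omega)
          (by intro _; dsimp -failIfUnchanged only; split_ifs <;> omega)
          (by intro _; dsimp -failIfUnchanged only; split_ifs <;> omega)
          (by intro Φ hΦ; subst hΦ
              simp [mkPhi_vc, hvu]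
              try first | omega | (split_ifs <;> omega))
      · -- C6 : e₀ = s(va p 1, vb p 1)
        exact gadget_case hr hℓ hp hvu q hne _ _ hE
          (fun x => if x ≤ r / 2 then (ℓ : ℤ) + ((r / 2 : ℕ) : ℤ) - x
            else (ℓ : ℤ) + (x : ℤ) - ((r / 2 : ℕ) : ℤ))
          (fun j => (j : ℤ) - 1)
          (fun j => min ((ℓ : ℤ) + (((r + 1) / 2 : ℕ) : ℤ) - ((r / 2 : ℕ) : ℤ) + (j : ℤ))
            ((ℓ : ℤ) + (((r + 1) / 2 : ℕ) : ℤ) + (ℓ : ℤ) - j))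
          ((ℓ : ℤ) + ((r / 2 : ℕ) : ℤ)) ((ℓ : ℤ) + (((r + 1) / 2 : ℕ) : ℤ))
          (by omega)
          (by intro _; dsimp -failIfUnchanged only; split_ifs <;> omega)
          (by intro i hi1 hi2 _; dsimp -failIfUnchanged only; split_ifs <;> omega)
          (by intro _; dsimp -failIfUnchanged only; split_ifs <;> omega)
          (by intro j hj1 hj2 _; dsimp -failIfUnchanged only; omega)
          (by intro j hj1 hj2 _; dsimp -failIfUnchanged only; omega)
          (fun hne' => absurd rfl hne')
          (by intro _; dsimp -failIfUnchanged only; split_ifs <;> omega)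
          (by intro _; dsimp -failIfUnchanged only; split_ifs <;> omega)
          (by intro _; dsimp -failIfUnchanged only; split_ifs <;> omega)
          (by intro Φ hΦ; subst hΦ
              simp [mkPhi_va, mkPhi_vb, hvu]
              try first | omega | (split_ifs <;> omega))
      · -- C7 : e₀ = s(va p (r/2), vb p ℓ)
        exact gadget_case hr hℓ hp hvu q hne _ _ hE
          (fun x => min ((ℓ : ℤ) + (x : ℤ) - 1) ((ℓ : ℤ) + min ((r : ℤ) - 1) 3 + (r : ℤ) - x))
          (fun j => (ℓ : ℤ) - j)
          (fun j => min (min ((ℓ : ℤ) + (((r + 1) / 2 : ℕ) : ℤ) - 1) ((ℓ : ℤ) + min ((r : ℤ) - 1) 3 + ((r / 2 : ℕ) : ℤ)) + (j : ℤ))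
            (min ((ℓ : ℤ) + (r : ℤ) - 2) ((ℓ : ℤ) + min ((r : ℤ) - 1) 3 + 1) + 1 + (ℓ : ℤ) - j))
          ((ℓ : ℤ) + 1) ((ℓ : ℤ) + min ((r : ℤ) - 1) 3)
          (by omega)
          (by intro _; dsimp -failIfUnchanged only; omega)
          (by intro i hi1 hi2 _; dsimp -failIfUnchanged only; omega)
          (by intro _; dsimp -failIfUnchanged only; omega)
          (by intro j hj1 hj2 _; dsimp -failIfUnchanged only; omega)
          (by intro j hj1 hj2 _; dsimp -failIfUnchanged only; omega)
          (by intro _; dsimp -failIfUnchanged only; omega)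
          (fun hne' => absurd rfl hne')
          (by intro _; dsimp -failIfUnchanged only; omega)
          (by intro _; dsimp -failIfUnchanged only; omega)
          (by intro Φ hΦ; subst hΦ
              simp [mkPhi_va, mkPhi_vb, hvu]
              try first | omega | (split_ifs <;> omega))
      · -- C8 : e₀ = s(va p ((r+1)/2), vc p 1)
        exact gadget_case hr hℓ hp hvu q hne _ _ hE
          (fun x => min ((ℓ : ℤ) + (r : ℤ) - x - 1) ((ℓ : ℤ) + min ((r : ℤ) - 1) 3 + (x : ℤ)))
          (fun j => min (min ((ℓ : ℤ) + (r : ℤ) - 2) ((ℓ : ℤ) + min ((r : ℤ) - 1) 3 + 1) + (j : ℤ))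
            (min ((ℓ : ℤ) + (((r + 1) / 2 : ℕ) : ℤ) - 1) ((ℓ : ℤ) + min ((r : ℤ) - 1) 3 + ((r / 2 : ℕ) : ℤ)) + 1 + (ℓ : ℤ) - j))
          (fun j => (j : ℤ) - 1)
          ((ℓ : ℤ) + min ((r : ℤ) - 1) 3) ((ℓ : ℤ) + 1)
          (by omega)
          (by intro _; dsimp -failIfUnchanged only; omega)
          (by intro i hi1 hi2 _; dsimp -failIfUnchanged only; omega)
          (by intro _; dsimp -failIfUnchanged only; omega)
          (by intro j hj1 hj2 _; dsimp -failIfUnchanged only; omega)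
          (by intro j hj1 hj2 _; dsimp -failIfUnchanged only; omega)
          (by intro _; dsimp -failIfUnchanged only; omega)
          (by intro _; dsimp -failIfUnchanged only; omega)
          (fun hne' => absurd rfl hne')
          (by intro _; dsimp -failIfUnchanged only; omega)
          (by intro Φ hΦ; subst hΦ
              simp [mkPhi_va, mkPhi_vc, hvu]
              try first | omega | (split_ifs <;> omega))
      · -- C9 : e₀ = s(va p (r-1), vc p ℓ)
        exact gadget_case hr hℓ hp hvu q hne _ _ hE
          (fun x => if x ≤ (r + 1) / 2 then (ℓ : ℤ) + (((r + 1) / 2 : ℕ) : ℤ) - x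
            else (ℓ : ℤ) + (x : ℤ) - (((r + 1) / 2 : ℕ) : ℤ))
          (fun j => min ((ℓ : ℤ) + (((r + 1) / 2 : ℕ) : ℤ) - 1 + (j : ℤ))
            ((ℓ : ℤ) + (((r + 1) / 2 : ℕ) : ℤ) - ((r / 2 : ℕ) : ℤ) + 1 + (ℓ : ℤ) - j))
          (fun j => (ℓ : ℤ) - j)
          ((ℓ : ℤ) + (((r + 1) / 2 : ℕ) : ℤ)) ((ℓ : ℤ) + ((r / 2 : ℕ) : ℤ))
          (by omega)
          (by intro _; dsimp -failIfUnchanged only; split_ifs <;> omega)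
          (by intro i hi1 hi2 _; dsimp -failIfUnchanged only; split_ifs <;> omega)
          (by intro _; dsimp -failIfUnchanged only; split_ifs <;> omega)
          (by intro j hj1 hj2 _; dsimp -failIfUnchanged only; omega)
          (by intro j hj1 hj2 _; dsimp -failIfUnchanged only; omega)
          (by intro _; dsimp -failIfUnchanged only; split_ifs <;> omega)
          (by intro _; dsimp -failIfUnchanged only; split_ifs <;> omega)
          (by intro _; dsimp -failIfUnchanged only; split_ifs <;> omega)
          (fun hne' => absurd rfl hne')
          (by intro Φ hΦ; subst hΦ
              simp [mkPhi_va, mkPhi_vc, hvu]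
              try first | omega | (split_ifs <;> omega))
    · -- C10 : e₀ = s(vx k, vx (k+1))
      exact x_case hr hℓ q hne _ _ hE
        (fun _ => (r : ℤ) + 2 - k)
        (fun x => if k + 1 ≤ x then (x : ℤ) - k - 1 else (r : ℤ) + x - k)
        ((r : ℤ) + 2 - k)
        (fun x => le_refl _)
        (by intro x x'; dsimp -failIfUnchanged only; omega)
        (by intro k' h1 h2 hne'
            by_cases hkk : k' = k
            · subst hkk; exact absurd rfl hne'
            · dsimp -failIfUnchanged only; split_ifs <;> omega)
        (by intro _; dsimp -failIfUnchanged only; split_ifs <;> omega)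
        (by intro u _; dsimp -failIfUnchanged only; split_ifs <;> omega)
        (by intro Φ hΦ; subst hΦ
            simp [mkPhi_vx]
            try first | omega | (split_ifs <;> omega))
    · -- C11 : e₀ = s(vx (r+1), vx 1)
      exact x_case hr hℓ q hne _ _ hE
        (fun _ => 1)
        (fun x => (x : ℤ) - 1)
        1
        (fun x => le_refl _)
        (by intro x x'; dsimp -failIfUnchanged only; omega)
        (by intro k h1 h2 _; dsimp -failIfUnchanged only; omega)
        (fun hne' => absurd rfl hne')
        (by intro u _; dsimp -failIfUnchanged only; omega)
        (by intro Φ hΦ; subst hΦ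
            simp [mkPhi_vx]
            try first | omega | (split_ifs <;> omega))
    · -- C12 : e₀ = s(vx 1, vo u)
      exact x_case hr hℓ q hne _ _ hE
        (fun x => if x = u then 0 else (r : ℤ))
        (fun x => if x = 1 then (r : ℤ) + 1 else (r : ℤ) + 2)
        ((r : ℤ) + 2)
        (by intro x; dsimp -failIfUnchanged only; split_ifs <;> omega)
        (by intro x x'; dsimp -failIfUnchanged only; split_ifs <;> omega)
        (by intro k h1 h2 _; dsimp -failIfUnchanged only; split_ifs <;> omega)
        (by intro _; dsimp -failIfUnchanged only; split_ifs <;> omega)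
        (by intro u' hne'
            by_cases huu : u' = u
            · subst huu; exact absurd rfl hne'
            · dsimp -failIfUnchanged only; rw [if_pos rfl, if_neg huu]; omega)
        (by intro Φ hΦ; subst hΦ
            simp [mkPhi_vx, mkPhi_vo]
            try first | omega | (split_ifs <;> omega))

end FTFVSHardness
end

section
/- Let G be a finite simple graph with distinguished vertices s and t, let C be a cycle in G, and let a ≠ b be vertices of C that form a local s-t pair for C. Then for every set T ⊆ V(G) with T ∩ (V(C) \ {a,b}) = ∅, T is not a tracking set for G; that is, there exist two distinct simple s-t paths P_1 ≠ P_2 in G whose tracker sequences with respect to T are equal. -/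
open SimpleGraph

lemma aux_singleton {α : Type*} {l : List α} {b : α}
    (hn : l.Nodup) (hb : b ∈ l) (h : ∀ x ∈ l, x = b) : l = [b] := by
  cases l with
  | nil => simp at hb
  | cons x xs =>
    have hx : x = b := h x (by simp)
    subst hx
    have hxs : xs = [] := by
      apply List.eq_nil_iff_forall_not_mem.mpr
      intro y hy
      have hyb := h y (by simp [hy])
      subst hyb
      exact (List.nodup_cons.mp hn).1 hy
    simp [hxs]

lemma aux_isPath_append {V : Type*} {G : SimpleGraph V} {u v w : V}
    {p : G.Walk u v} {q : G.Walk v w} (hp : p.IsPath) (hq : q.IsPath)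
    (h : ∀ x, x ∈ p.support → x ∈ q.support → x = v) : (p.append q).IsPath := by
  have hq' := hq.support_nodup
  rw [q.support_eq_cons, List.nodup_cons] at hq'
  rw [Walk.isPath_def, Walk.support_append]
  refine List.Nodup.append hp.support_nodup hq'.2 ?_
  intro x hx hx'
  have : x = v := h x hx (List.mem_of_mem_tail hx')
  subst this
  exact hq'.1 hx'

lemma aux_mem_tail {V : Type*} {G : SimpleGraph V} {u : V}
    (p : G.Walk u u) (hp : ¬ p.Nil) (x : V) :
    x ∈ p.support ↔ x ∈ p.support.tail := by
  cases p with
  | nil => simp at hp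
  | cons h q =>
    simp only [Walk.support_cons, List.tail_cons, List.mem_cons]
    constructor
    · rintro (rfl | hx)
      · exact q.end_mem_support
      · exact hx
    · exact fun hx => Or.inr hx

/-- The tracker sequence of a walk `p` with respect to a tracker set `T`: the subsequence of
the vertex sequence of `p` consisting of the vertices lying in `T`. -/
def trackerSeq {V : Type*} [DecidableEq V] {G : SimpleGraph V} {s t : V}
    (T : Finset V) (p : G.Walk s t) : List V :=
  p.support.filter (· ∈ T)

/-- `T` is a tracking set for `G` (with source `s` and target `t`) if any two distinct
simple `s`-`t` paths have distinct tracker sequences. -/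
def IsTrackingSet {V : Type*} [DecidableEq V] (G : SimpleGraph V) (s t : V)
    (T : Finset V) : Prop :=
  ∀ P₁ P₂ : G.Walk s t, P₁.IsPath → P₂.IsPath → trackerSeq T P₁ = trackerSeq T P₂ → P₁ = P₂

/-- Vertices `a, b` of a subgraph with vertex set `U` form a local `s`-`t` pair for it if
there are simple paths `P_sa` from `s` to `a` and `P_bt` from `b` to `t` in `G` with
`V(P_sa) ∩ V(P_bt) = ∅`, `V(P_sa) ∩ U = {a}` and `V(P_bt) ∩ U = {b}`. -/
def LocalSTPair {V : Type*} (G : SimpleGraph V) (s t : V) (U : Set V) (a b : V) : Prop :=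
  a ∈ U ∧ b ∈ U ∧
  ∃ (Psa : G.Walk s a) (Pbt : G.Walk b t),
    Psa.IsPath ∧ Pbt.IsPath ∧
    {v | v ∈ Psa.support} ∩ {v | v ∈ Pbt.support} = (∅ : Set V) ∧
    {v | v ∈ Psa.support} ∩ U = {a} ∧
    {v | v ∈ Pbt.support} ∩ U = {b}

/-- If a cycle `C` of `G` has a local `s`-`t` pair `a ≠ b` and
`T ∩ (V(C) \ {a,b}) = ∅`, then `T` is not a tracking set: there are two distinct simple
`s`-`t` paths with equal tracker sequences. -/
theorem not_trackingSet_of_untracked_cycle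
    {V : Type*} [Fintype V] [DecidableEq V]
    (G : SimpleGraph V) (s t : V)
    {v : V} (C : G.Walk v v) (hC : C.IsCycle)
    (a b : V) (hab : a ≠ b)
    (hloc : LocalSTPair G s t {x | x ∈ C.support} a b)
    (T : Finset V)
    (hT : ↑T ∩ ({x | x ∈ C.support} \ {a, b}) = (∅ : Set V)) :
    ∃ P₁ P₂ : G.Walk s t, P₁.IsPath ∧ P₂.IsPath ∧ P₁ ≠ P₂ ∧
      trackerSeq T P₁ = trackerSeq T P₂ := by
  obtain ⟨haC, hbC, Psa, Pbt, hPsa, hPbt, hdisj, hsa, hbt⟩ := hloc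
  simp only [Set.mem_setOf_eq] at haC hbC
  -- rotate the cycle to start at a
  set C' : G.Walk a a := C.rotate a haC with hC'def
  have hC' : C'.IsCycle := hC.rotate haC
  have hmem : ∀ x, x ∈ C'.support ↔ x ∈ C.support := by
    intro x
    rw [aux_mem_tail C' hC'.not_nil, aux_mem_tail C hC.not_nil,
      (Walk.support_rotate C a haC).perm.mem_iff]
  have hb' : b ∈ C'.support := (hmem b).mpr hbC
  set W1 : G.Walk a b := C'.takeUntil b hb' with hW1def
  set D : G.Walk b a := C'.dropUntil b hb' with hDdef
  have hspec : W1.append D = C' := C'.take_spec hb'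
  set t1 : List V := W1.support.tail with ht1def
  set t2 : List V := D.support.tail with ht2def
  have hsupp : C'.support = a :: (t1 ++ t2) := by
    rw [← hspec, Walk.support_append, W1.support_eq_cons, ht1def, ht2def]
    simp
    exact congrArg (· ++ D.support.tail) W1.support_eq_cons
  have hnd : (t1 ++ t2).Nodup := by
    have := hC'.support_nodup
    rw [hsupp] at this
    simpa using this
  have hdj : List.Disjoint t1 t2 := List.disjoint_of_nodup_append hnd
  have hbt1 : b ∈ t1 := by
    have : b ∈ W1.support := W1.end_mem_support
    rw [W1.support_eq_cons] at this
    rcases List.mem_cons.mp this with h | h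
    · exact absurd h.symm hab
    · exact h
  have hat2 : a ∈ t2 := by
    have : a ∈ D.support := D.end_mem_support
    rw [D.support_eq_cons] at this
    rcases List.mem_cons.mp this with h | h
    · exact absurd h hab
    · exact h
  have hat1 : a ∉ t1 := fun h => hdj h hat2
  have hbt2 : b ∉ t2 := fun h => hdj hbt1 h
  have hW1path : W1.IsPath := by
    rw [Walk.isPath_def, W1.support_eq_cons, List.nodup_cons]
    exact ⟨hat1, hnd.of_append_left⟩
  have hDpath : D.IsPath := by
    rw [Walk.isPath_def, D.support_eq_cons, List.nodup_cons]
    exact ⟨hbt2, hnd.of_append_right⟩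
  set W2 : G.Walk a b := D.reverse with hW2def
  have hW2path : W2.IsPath := hDpath.reverse
  have hW1sub : ∀ x ∈ W1.support, x ∈ C.support := fun x hx =>
    (hmem x).mp (C'.support_takeUntil_subset hb' hx)
  have hDsub : ∀ x ∈ D.support, x ∈ C.support := fun x hx =>
    (hmem x).mp (C'.support_dropUntil_subset hb' hx)
  have hW2sub : ∀ x ∈ W2.support, x ∈ C.support := by
    intro x hx
    rw [hW2def, Walk.support_reverse, List.mem_reverse] at hx
    exact hDsub x hx
  -- the key filter lemma for arcs
  have key : ∀ (A : G.Walk a b), A.IsPath → (∀ x ∈ A.support, x ∈ C.support) →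
      A.support.tail.filter (· ∈ T) = if b ∈ T then [b] else [] := by
    intro A hA hAsub
    have hnodup := hA.support_nodup
    rw [A.support_eq_cons, List.nodup_cons] at hnodup
    have hbmem : b ∈ A.support.tail := by
      have : b ∈ A.support := A.end_mem_support
      rw [A.support_eq_cons] at this
      rcases List.mem_cons.mp this with h | h
      · exact absurd h.symm hab
      · exact h
    have hall : ∀ x ∈ A.support.tail, x ∈ T → x = b := by
      intro x hx hxT
      by_contra hxb
      have hxa : x ≠ a := fun h => hnodup.1 (h ▸ hx)
      have hxC : x ∈ C.support := hAsub x (List.mem_of_mem_tail hx)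
      have : x ∈ (↑T ∩ ({x | x ∈ C.support} \ {a, b}) : Set V) := by
        refine ⟨hxT, hxC, ?_⟩
        simp [hxa, hxb]
      rw [hT] at this
      exact this
    by_cases hbT : b ∈ T
    · rw [if_pos hbT]
      apply aux_singleton ((hnodup.2).filter _)
      · rw [List.mem_filter]
        exact ⟨hbmem, by simpa using hbT⟩
      · intro x hx
        rw [List.mem_filter] at hx
        exact hall x hx.1 (by simpa using hx.2)
    · rw [if_neg hbT]
      rw [List.filter_eq_nil_iff]
      intro x hx
      simp only [decide_eq_true_eq]
      intro hxT
      exact hbT ((hall x hx hxT) ▸ hxT)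
  -- build the two paths
  have hbtprop : ∀ x, x ∈ Pbt.support → x ∈ C.support → x = b := by
    intro x h1 h2
    have : x ∈ ({v | v ∈ Pbt.support} ∩ {x | x ∈ C.support} : Set V) := ⟨h1, h2⟩
    rw [hbt] at this
    exact this
  have hsaprop : ∀ x, x ∈ Psa.support → x ∈ C.support → x = a := by
    intro x h1 h2
    have : x ∈ ({v | v ∈ Psa.support} ∩ {x | x ∈ C.support} : Set V) := ⟨h1, h2⟩
    rw [hsa] at this
    exact this
  have hdisj' : ∀ x, x ∈ Psa.support → x ∈ Pbt.support → False := by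
    intro x h1 h2
    have : x ∈ ({v | v ∈ Psa.support} ∩ {v | v ∈ Pbt.support} : Set V) := ⟨h1, h2⟩
    rw [hdisj] at this
    exact this
  have hQpath : ∀ (A : G.Walk a b), A.IsPath → (∀ x ∈ A.support, x ∈ C.support) →
      (A.append Pbt).IsPath := by
    intro A hA hAsub
    exact aux_isPath_append hA hPbt (fun x hx hx' => hbtprop x hx' (hAsub x hx))
  have hPpath : ∀ (A : G.Walk a b), A.IsPath → (∀ x ∈ A.support, x ∈ C.support) →
      (Psa.append (A.append Pbt)).IsPath := by
    intro A hA hAsub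
    refine aux_isPath_append hPsa (hQpath A hA hAsub) ?_
    intro x hx hx'
    rcases (Walk.mem_support_append_iff _ _).mp hx' with h | h
    · exact hsaprop x hx (hAsub x h)
    · exact absurd (hdisj' x hx h) (not_false)
  have hsuppP : ∀ (A : G.Walk a b),
      (Psa.append (A.append Pbt)).support
        = Psa.support ++ (A.support.tail ++ Pbt.support.tail) := by
    intro A
    rw [Walk.support_append, Walk.tail_support_append]
  refine ⟨Psa.append (W1.append Pbt), Psa.append (W2.append Pbt),
    hPpath W1 hW1path hW1sub, hPpath W2 hW2path hW2sub, ?_, ?_⟩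
  · -- distinctness
    intro hEq
    have hsupEq := congrArg Walk.support hEq
    rw [hsuppP W1, hsuppP W2] at hsupEq
    have htt : t1 = W2.support.tail := by
      have := List.append_cancel_left hsupEq
      exact List.append_cancel_right this
    have hW2supp : W2.support = t2.reverse ++ [b] := by
      rw [hW2def, Walk.support_reverse, D.support_eq_cons]
      simp
      exact D.support_eq_cons
    have ht2ne : t2.reverse ≠ [] := by
      simp only [ne_eq, List.reverse_eq_nil_iff]
      intro h
      rw [h] at hat2
      simp at hat2
    have htail : W2.support.tail = t2.reverse.tail ++ [b] := by
      rw [hW2supp, List.tail_append_of_ne_nil ht2ne]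
    have hnil : t2.reverse.tail = [] := by
      apply List.eq_nil_iff_forall_not_mem.mpr
      intro y hy
      have hy2 : y ∈ t2 := List.mem_reverse.mp (List.mem_of_mem_tail hy)
      have hy1 : y ∈ t1 := by
        rw [htt, htail]
        exact List.mem_append_left _ hy
      exact hdj hy1 hy2
    have ht2a : t2 = [a] := by
      have hlen : t2.length = 1 := by
        have h1 : t2.reverse.tail.length = 0 := by rw [hnil]; rfl
        rw [List.length_tail, List.length_reverse] at h1
        have h2 : 0 < t2.length := List.length_pos_iff.mpr (fun h => by rw [h] at hat2; simp at hat2)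
        omega
      rcases List.length_eq_one_iff.mp hlen with ⟨x, hx⟩
      rw [hx] at hat2 ⊢
      simp at hat2
      rw [hat2]
    have ht1b : t1 = [b] := by
      rw [htt, htail, hnil]
      simp
    have hlenC : C'.length = 2 := by
      have := C'.length_support
      rw [hsupp, ht1b, ht2a] at this
      simp at this
      omega
    have := hC'.three_le_length
    omega
  · -- tracker sequences equal
    show trackerSeq T _ = trackerSeq T _
    unfold trackerSeq
    rw [hsuppP W1, hsuppP W2]
    simp only [List.filter_append]
    rw [key W1 hW1path hW1sub, key W2 hW2path hW2sub]
end
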